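/- arXiv:2408.12515 — 4 statements merged into one kernel-verified Lean document; each statement's English description precedes it below -/
import Mathlib

section
/- The measure ν_p defined by ν_p(0) = 1−p and ν_p(k) = (1−p)·B(1+1/p, k) for k ≥ 1, where B is the Beta function, satisfies ⟨ν_p, x∨1⟩ = ν_p(0) + Σ_{k≥1} k·ν_p(k) = 1, i.e. (1−p)·Σ_{k=1}^∞ k·B(1+1/p, k) = p. -/
open Real

/-- The Beta function `B(x,y) = Γ(x)Γ(y)/Γ(x+y)`. -/
noncomputable def betaFn (x y : ℝ) : ℝ := Real.Gamma x * Real.Gamma y / Real.Gamma (x + y)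

/-- The measure `ν_p` on `ℕ`: `ν_p(0) = 1 - p`, `ν_p(k) = (1-p) B(1+1/p, k)` for `k ≥ 1`. -/
noncomputable def nuP (p : ℝ) : ℕ → ℝ
  | 0 => 1 - p
  | (k + 1) => (1 - p) * betaFn (1 + 1 / p) (k + 1)

open Filter Finset Topology

private lemma aux_gamma_prod (a : ℝ) (ha : 0 < a) (n : ℕ) :
    Real.Gamma (a + n) = Real.Gamma a * ∏ j ∈ Finset.range n, (a + j) := by
  induction n with
  | zero => simp
  | succ n ih =>
    have hpos : (0:ℝ) < a + n := by
      have : (0:ℝ) ≤ n := Nat.cast_nonneg n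
      linarith
    have h1 : a + ((n:ℝ) + 1) = (a + n) + 1 := by ring
    push_cast
    rw [h1, Real.Gamma_add_one hpos.ne', ih, Finset.prod_range_succ]
    ring

/-- The telescoping auxiliary sequence. -/
private noncomputable def gFn (a : ℝ) (k : ℕ) : ℝ :=
  ((k : ℝ) + a) / (a - 2) * (Real.Gamma a * (Nat.factorial (k + 1)) / Real.Gamma (a + k + 1))

private lemma gFn_sub (a : ℝ) (ha : 2 < a) (k : ℕ) :
    gFn a k - gFn a (k + 1) = ((k : ℝ) + 1) * betaFn a ((k : ℝ) + 1) := by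
  have ha0 : (0:ℝ) < a := by linarith
  have hk1 : (0:ℝ) < a + k + 1 := by
    have : (0:ℝ) ≤ k := Nat.cast_nonneg k
    linarith
  have hG1 : 0 < Real.Gamma (a + k + 1) := Real.Gamma_pos_of_pos hk1
  have hG2 : Real.Gamma (a + ((k:ℝ) + 1) + 1) = (a + k + 1) * Real.Gamma (a + k + 1) := by
    rw [show a + ((k:ℝ) + 1) + 1 = (a + k + 1) + 1 by ring, Real.Gamma_add_one hk1.ne']
  have hGk : Real.Gamma ((k:ℝ) + 1) = Nat.factorial k := by
    exact_mod_cast Real.Gamma_nat_eq_factorial k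
  unfold gFn betaFn
  push_cast [Nat.factorial_succ]
  rw [hG2, hGk]
  have ha2 : a - 2 ≠ 0 := by linarith
  field_simp
  ring
private lemma aux_lim (a : ℝ) (ha : 2 < a) :
    Tendsto (fun n : ℕ => ((n:ℝ) + a) * ((n:ℝ) + 1) * (n:ℝ) ^ (-a)) atTop (𝓝 0) := by
  have h1 : Tendsto (fun n : ℕ => 1 + a / n) atTop (𝓝 1) := by
    simpa using tendsto_const_nhds.add (tendsto_const_div_atTop_nhds_zero_nat a)
  have h2 : Tendsto (fun n : ℕ => 1 + 1 / (n:ℝ)) atTop (𝓝 1) := by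
    simpa using tendsto_const_nhds.add (tendsto_const_div_atTop_nhds_zero_nat (1:ℝ))
  have h3 : Tendsto (fun n : ℕ => (n:ℝ) ^ (-(a - 2))) atTop (𝓝 0) :=
    (tendsto_rpow_neg_atTop (by linarith : (0:ℝ) < a - 2)).comp
      tendsto_natCast_atTop_atTop
  have h := (h1.mul h2).mul h3
  rw [show (1:ℝ) * 1 * 0 = 0 by ring] at h
  apply h.congr'
  filter_upwards [eventually_ge_atTop 1] with n hn
  have hn0 : (0:ℝ) < n := by exact_mod_cast hn
  have : (n:ℝ) ^ (-(a - 2)) = (n:ℝ) ^ 2 * (n:ℝ) ^ (-a) := by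
    rw [← Real.rpow_natCast (n:ℝ) 2, ← Real.rpow_add hn0]
    ring_nf
  rw [this]
  field_simp

private lemma gFn_tendsto (a : ℝ) (ha : 2 < a) : Tendsto (gFn a) atTop (𝓝 0) := by
  have ha0 : (0:ℝ) < a := by linarith
  have hG := Real.GammaSeq_tendsto_Gamma a
  have h := (hG.mul (aux_lim a ha)).div_const (a - 2)
  rw [mul_zero, zero_div] at h
  apply h.congr'
  filter_upwards [eventually_ge_atTop 1] with n hn
  have hn0 : (0:ℝ) < n := by exact_mod_cast hn
  have hprod : ∀ j ∈ Finset.range (n + 1), (0:ℝ) < a + j := fun j _ => by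
    have : (0:ℝ) ≤ j := Nat.cast_nonneg j
    linarith
  have hP : (0:ℝ) < ∏ j ∈ Finset.range (n + 1), (a + j) := Finset.prod_pos hprod
  have hGam : Real.Gamma (a + (n + 1 : ℕ)) =
      Real.Gamma a * ∏ j ∈ Finset.range (n + 1), (a + j) := aux_gamma_prod a ha0 (n + 1)
  have hGa : 0 < Real.Gamma a := Real.Gamma_pos_of_pos ha0
  have hcast : a + ((n:ℝ)) + 1 = a + ((n + 1 : ℕ) : ℝ) := by push_cast; ring
  unfold gFn Real.GammaSeq
  rw [hcast, hGam]
  have hrpow : (0:ℝ) < (n:ℝ) ^ a := Real.rpow_pos_of_pos hn0 a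
  have h4 : (∏ j ∈ Finset.range (n + 1), (a + (j:ℝ))) ≠ 0 := hP.ne'
  have h5 : (n:ℝ) ^ a ≠ 0 := hrpow.ne'
  have h6 : a - 2 ≠ 0 := by linarith
  have hinv : (n:ℝ) ^ a * ((n:ℝ) ^ a)⁻¹ = 1 := mul_inv_cancel₀ h5
  rw [Real.rpow_neg hn0.le, div_mul_eq_mul_div, div_div, div_mul_div_comm,
    div_eq_div_iff (mul_ne_zero h4 h6) (mul_ne_zero h6 (mul_ne_zero hGa.ne' h4))]
  push_cast [Nat.factorial_succ]
  linear_combination ((n.factorial : ℝ) * ((n:ℝ) + a) * ((n:ℝ) + 1) * (a - 2) *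
    Real.Gamma a * (∏ j ∈ Finset.range (n + 1), (a + (j:ℝ)))) * hinv

private lemma gFn_zero (a : ℝ) (ha : 2 < a) : gFn a 0 = 1 / (a - 2) := by
  have ha0 : (0:ℝ) < a := by linarith
  have hGa : 0 < Real.Gamma a := Real.Gamma_pos_of_pos ha0
  unfold gFn
  rw [show a + (0:ℕ) + 1 = a + 1 by push_cast; ring, Real.Gamma_add_one ha0.ne']
  have h1 : Real.Gamma a ≠ 0 := hGa.ne'
  have h2 : a ≠ 0 := ha0.ne'
  have h3 : a - 2 ≠ 0 := by linarith
  field_simp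
  ring

private lemma hasSum_beta (a : ℝ) (ha : 2 < a) :
    HasSum (fun k : ℕ => ((k : ℝ) + 1) * betaFn a ((k : ℝ) + 1)) (1 / (a - 2)) := by
  have ha0 : (0:ℝ) < a := by linarith
  have hnn : ∀ k : ℕ, 0 ≤ ((k : ℝ) + 1) * betaFn a ((k : ℝ) + 1) := by
    intro k
    have h1 : 0 < Real.Gamma a := Real.Gamma_pos_of_pos ha0
    have h2 : 0 < Real.Gamma ((k:ℝ) + 1) := Real.Gamma_pos_of_pos (by positivity)
    have h3 : 0 < Real.Gamma (a + ((k:ℝ) + 1)) := Real.Gamma_pos_of_pos (by positivity)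
    have : 0 ≤ betaFn a ((k:ℝ) + 1) := by unfold betaFn; positivity
    positivity
  rw [hasSum_iff_tendsto_nat_of_nonneg hnn]
  have hsum : ∀ n, ∑ k ∈ Finset.range n, ((k : ℝ) + 1) * betaFn a ((k : ℝ) + 1)
      = gFn a 0 - gFn a n := by
    intro n
    rw [← Finset.sum_range_sub' (gFn a)]
    exact Finset.sum_congr rfl fun k _ => (gFn_sub a ha k).symm
  have h := (gFn_tendsto a ha).const_sub (gFn a 0)
  rw [sub_zero] at h
  rw [← gFn_zero a ha]
  exact Tendsto.congr (fun n => (hsum n).symm) h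

/-- `⟨ν_p, x ∨ 1⟩ = ν_p(0) + Σ_{k ≥ 1} k ν_p(k) = 1`, equivalently
`(1-p) Σ_{k=1}^∞ k B(1+1/p, k) = p`. -/
theorem nuP_total_mass (p : ℝ) (hp : p ∈ Set.Ioo (0 : ℝ) 1) :
    nuP p 0 + ∑' k : ℕ, ((k : ℝ) + 1) * nuP p (k + 1) = 1 ∧
    (1 - p) * ∑' k : ℕ, ((k : ℝ) + 1) * betaFn (1 + 1 / p) (k + 1) = p := by
  obtain ⟨hp0, hp1⟩ := hp
  have h1p : 1 - p ≠ 0 := by linarith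
  have ha : 2 < 1 + 1 / p := by
    have : 1 < 1 / p := by rw [lt_div_iff₀ hp0]; linarith
    linarith
  have hS := hasSum_beta (1 + 1 / p) ha
  have hval : 1 / (1 + 1 / p - 2) = p / (1 - p) := by
    rw [show 1 + 1 / p - 2 = (1 - p) / p by field_simp; ring, one_div_div]
  rw [hval] at hS
  have htsum : ∑' k : ℕ, ((k : ℝ) + 1) * betaFn (1 + 1 / p) ((k:ℝ) + 1) = p / (1 - p) :=
    hS.tsum_eq
  have hbeta : (1 - p) * ∑' k : ℕ, ((k : ℝ) + 1) * betaFn (1 + 1 / p) ((k:ℝ) + 1) = p := by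
    rw [htsum]; field_simp
  refine ⟨?_, hbeta⟩
  have hnu : ∀ k : ℕ, ((k : ℝ) + 1) * nuP p (k + 1)
      = (1 - p) * (((k : ℝ) + 1) * betaFn (1 + 1 / p) ((k:ℝ) + 1)) := by
    intro k; simp only [nuP]; push_cast; ring
  rw [tsum_congr hnu, (hS.mul_left (1 - p)).tsum_eq]
  simp only [nuP]
  field_simp
  ring
end

section
/- For every p ∈ (0,1) and every j ∈ ℕ₊, (1/p − 1)·Σ_{k=j}^∞ B(1+1/p, k+1)·(1/j) = (1−p)·B(1+1/p, j). -/
lemma betaFn_pos {x y : ℝ} (hx : 0 < x) (hy : 0 < y) : 0 < betaFn x y := by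
  unfold betaFn
  have h1 := Real.Gamma_pos_of_pos hx
  have h2 := Real.Gamma_pos_of_pos hy
  have h3 := Real.Gamma_pos_of_pos (by linarith : 0 < x + y)
  positivity

lemma betaFn_succ {x y : ℝ} (hx : 0 < x) (hy : 0 < y) :
    betaFn x (y + 1) = y / (x + y) * betaFn x y := by
  unfold betaFn
  rw [Real.Gamma_add_one hy.ne', show x + (y + 1) = (x + y) + 1 by ring,
    Real.Gamma_add_one (by positivity : (x + y) ≠ 0)]
  have h1 : Real.Gamma (x + y) ≠ 0 := (Real.Gamma_pos_of_pos (by linarith)).ne'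
  have h2 : x + y ≠ 0 := by positivity
  field_simp

lemma betaFn_telescope {x : ℝ} (hx : 0 < x) {n : ℝ} (hn : 0 < n) :
    n * betaFn x n - (n + 1) * betaFn x (n + 1) = (x - 1) * betaFn x (n + 1) := by
  rw [betaFn_succ hx hn]
  have h2 : x + n ≠ 0 := by positivity
  field_simp
  ring

lemma betaFn_decay {a : ℝ} (ha : 2 ≤ a) (n : ℕ) :
    ((n : ℝ) + 1) * betaFn a ((n : ℝ) + 1) ≤ 2 * betaFn a 1 / ((n : ℝ) + 2) := by
  have ha0 : (0 : ℝ) < a := by linarith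
  induction n with
  | zero => simp
  | succ n ih =>
    have hn1 : (0 : ℝ) < (n : ℝ) + 1 := by positivity
    have hB : 0 ≤ betaFn a ((n : ℝ) + 1) := (betaFn_pos ha0 hn1).le
    have hcast : ((n + 1 : ℕ) : ℝ) = (n : ℝ) + 1 := by push_cast; ring
    rw [hcast, betaFn_succ ha0 hn1]
    have key : ((n : ℝ) + 1 + 1) * (((n : ℝ) + 1) / (a + ((n : ℝ) + 1))) *
        betaFn a ((n : ℝ) + 1) ≤ ((n : ℝ) + 2) / ((n : ℝ) + 3) *
        (((n : ℝ) + 1) * betaFn a ((n : ℝ) + 1)) := by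
      have hden : (0 : ℝ) < a + ((n : ℝ) + 1) := by linarith
      have : ((n : ℝ) + 2) / (a + ((n : ℝ) + 1)) ≤ ((n : ℝ) + 2) / ((n : ℝ) + 3) := by
        apply div_le_div_of_nonneg_left (by linarith) (by linarith) (by linarith)
      calc ((n : ℝ) + 1 + 1) * (((n : ℝ) + 1) / (a + ((n : ℝ) + 1))) *
            betaFn a ((n : ℝ) + 1)
          = ((n : ℝ) + 2) / (a + ((n : ℝ) + 1)) * (((n : ℝ) + 1) * betaFn a ((n : ℝ) + 1)) := by
            field_simp; ring
        _ ≤ ((n : ℝ) + 2) / ((n : ℝ) + 3) * (((n : ℝ) + 1) * betaFn a ((n : ℝ) + 1)) := by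
            apply mul_le_mul_of_nonneg_right this (by positivity)
    calc ((n : ℝ) + 1 + 1) * (((n : ℝ) + 1) / (a + ((n : ℝ) + 1)) * betaFn a ((n : ℝ) + 1))
        = ((n : ℝ) + 1 + 1) * (((n : ℝ) + 1) / (a + ((n : ℝ) + 1))) *
          betaFn a ((n : ℝ) + 1) := by ring
      _ ≤ ((n : ℝ) + 2) / ((n : ℝ) + 3) * (((n : ℝ) + 1) * betaFn a ((n : ℝ) + 1)) := key
      _ ≤ ((n : ℝ) + 2) / ((n : ℝ) + 3) * (2 * betaFn a 1 / ((n : ℝ) + 2)) := by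
          apply mul_le_mul_of_nonneg_left ih (by positivity)
      _ = 2 * betaFn a 1 / ((n : ℝ) + 1 + 2) := by
          field_simp; ring

/-- For every `p ∈ (0,1)` and `j ≥ 1`:
`(1/p − 1) Σ_{k=j}^∞ B(1+1/p, k+1) (1/j) = (1−p) B(1+1/p, j)`. -/
theorem tsum_beta_tail_eq (p : ℝ) (hp : p ∈ Set.Ioo (0 : ℝ) 1) (j : ℕ) (hj : 1 ≤ j) :
    (1 / p - 1) * ∑' k : ℕ, betaFn (1 + 1 / p) ((j + k : ℕ) + 1) * (1 / (j : ℝ)) =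
      (1 - p) * betaFn (1 + 1 / p) j := by
  obtain ⟨hp0, hp1⟩ := hp
  set a : ℝ := 1 + 1 / p with ha_def
  have h1p : 1 < 1 / p := one_lt_one_div hp0 hp1
  have ha0 : (0 : ℝ) < a := by rw [ha_def]; linarith
  have ha2 : (2 : ℝ) ≤ a := by rw [ha_def]; linarith
  have ham1 : a - 1 = 1 / p := by rw [ha_def]; ring
  have hjR : (0 : ℝ) < (j : ℝ) := by exact_mod_cast hj
  -- define the telescoping sequence
  set g : ℕ → ℝ := fun k => ((j + k : ℕ) : ℝ) * betaFn a ((j + k : ℕ)) with hg_def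
  have hjk : ∀ k : ℕ, (0 : ℝ) < ((j + k : ℕ) : ℝ) := fun k => by
    have : 1 ≤ j + k := le_trans hj (Nat.le_add_right j k)
    exact_mod_cast this
  have htel : ∀ k : ℕ, g k - g (k + 1) = (a - 1) * betaFn a (((j + k : ℕ) : ℝ) + 1) := by
    intro k
    have hcast : ((j + (k + 1) : ℕ) : ℝ) = ((j + k : ℕ) : ℝ) + 1 := by push_cast; ring
    simp only [hg_def, hcast]
    exact betaFn_telescope ha0 (hjk k)
  -- limit of g
  have hg0 : Filter.Tendsto g Filter.atTop (nhds 0) := by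
    have hbound : ∀ k : ℕ, g k ≤ 2 * betaFn a 1 / ((k : ℝ) + 2) := by
      intro k
      have h1 : 1 ≤ j + k := le_trans hj (Nat.le_add_right j k)
      obtain ⟨m, hm⟩ := Nat.exists_eq_add_of_le h1
      have hcast : ((j + k : ℕ) : ℝ) = (m : ℝ) + 1 := by rw [hm]; push_cast; ring
      have hmk : (k : ℝ) ≤ (m : ℝ) := by
        have : k ≤ m := by omega
        exact_mod_cast this
      calc g k = ((m : ℝ) + 1) * betaFn a ((m : ℝ) + 1) := by rw [hg_def]; simp [hcast]
        _ ≤ 2 * betaFn a 1 / ((m : ℝ) + 2) := betaFn_decay ha2 m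
        _ ≤ 2 * betaFn a 1 / ((k : ℝ) + 2) := by
            apply div_le_div_of_nonneg_left _ (by positivity) (by linarith)
            have := betaFn_pos ha0 one_pos
            positivity
    have hnonneg : ∀ k : ℕ, 0 ≤ g k := fun k =>
      mul_nonneg (hjk k).le (betaFn_pos ha0 (hjk k)).le
    have hupper : Filter.Tendsto (fun k : ℕ => 2 * betaFn a 1 / ((k : ℝ) + 2))
        Filter.atTop (nhds 0) := by
      apply Filter.Tendsto.div_atTop tendsto_const_nhds
      exact Filter.tendsto_atTop_add_const_right _ 2 tendsto_natCast_atTop_atTop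
    exact squeeze_zero hnonneg hbound hupper
  -- HasSum for the telescoping series
  have hsum : HasSum (fun k : ℕ => (a - 1) * betaFn a (((j + k : ℕ) : ℝ) + 1)) (g 0) := by
    rw [hasSum_iff_tendsto_nat_of_nonneg]
    · have heq : ∀ n : ℕ, ∑ i ∈ Finset.range n,
          (a - 1) * betaFn a (((j + i : ℕ) : ℝ) + 1) = g 0 - g n := by
        intro n
        rw [← Finset.sum_range_sub' g n]
        exact Finset.sum_congr rfl fun i _ => (htel i).symm
      simp only [heq]
      simpa using tendsto_const_nhds.sub hg0
    · intro i
      exact mul_nonneg (by linarith) (betaFn_pos ha0 (by have := hjk i; linarith)).le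
  have hsum2 : HasSum (fun k : ℕ => betaFn a (((j + k : ℕ) : ℝ) + 1)) (g 0 / (a - 1)) := by
    have ha1 : a - 1 ≠ 0 := by rw [ham1]; positivity
    have := hsum.div_const (a - 1)
    simpa [mul_div_assoc, mul_div_cancel_left₀ _ ha1] using this
  have hsum3 : HasSum (fun k : ℕ => betaFn a (((j + k : ℕ) : ℝ) + 1) * (1 / (j : ℝ)))
      (g 0 / (a - 1) * (1 / (j : ℝ))) := hsum2.mul_right _
  rw [hsum3.tsum_eq]
  have hg0val : g 0 = (j : ℝ) * betaFn a j := by simp [hg_def]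
  rw [hg0val, ham1]
  have hpne : p ≠ 0 := hp0.ne'
  have hjne : (j : ℝ) ≠ 0 := hjR.ne'
  field_simp
end

section
/- Let C_k(j) denote the number of subtrees of size j obtained by removing the root of a uniform random recursive tree on k+1 vertices. Then the joint law of (C_k(1),…,C_k(k)) is given by P[C_k(1)=a_1,…,C_k(k)=a_k] = 1_{Σ_j j·a_j = k} · Π_{j=1}^k 1/(j^{a_j}·a_j!). -/
/-- An encoding of a recursive tree on vertices `{0, 1, …, k}` (root `0`): for each
`i : Fin k`, vertex `i+1` attaches to a parent among `{0, …, i}`.  The uniform measure on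
this type is the uniform random recursive tree on `k+1` vertices. -/
def RRTCode (k : ℕ) := ∀ i : Fin k, Fin (i.val + 1)

instance (k : ℕ) : Fintype (RRTCode k) := by unfold RRTCode; infer_instance
instance (k : ℕ) : DecidableEq (RRTCode k) := by unfold RRTCode; infer_instance

/-- The parent of vertex `v ∈ {1, …, k}` in the recursive tree coded by `σ`. -/
def rrtParent {k : ℕ} (σ : RRTCode k) (v : ℕ) : ℕ :=
  if h : 1 ≤ v ∧ v ≤ k then (σ ⟨v - 1, by omega⟩ : ℕ) else 0

/-- Fuelled ancestor climbing: iterate the parent map until reaching a child of the root. -/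
def rrtRepAux (f : ℕ → ℕ) : ℕ → ℕ → ℕ
  | 0, v => v
  | fuel + 1, v => if f v = 0 then v else rrtRepAux f fuel (f v)

/-- The child of the root which is an ancestor of `v` (or `v` itself if `v` is a child of
the root); i.e. the representative of the subtree containing `v` after removing the root. -/
def rrtRep {k : ℕ} (σ : RRTCode k) (v : ℕ) : ℕ := rrtRepAux (rrtParent σ) v v

/-- `C_k(j)(σ)`: the number of subtrees of size `j` obtained by removing the root of the
recursive tree on `k+1` vertices coded by `σ`. -/
def rrtC (k : ℕ) (σ : RRTCode k) (j : ℕ) : ℕ :=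
  ((Finset.Icc 1 k).filter fun c =>
    rrtParent σ c = 0 ∧ ((Finset.Icc 1 k).filter fun v => rrtRep σ v = c).card = j).card
namespace RRTaux

variable {f g : ℕ → ℕ}

/-- fuel stability -/
lemma repAux_fuel (hf : ∀ w, 1 ≤ w → f w < w) (hf0 : f 0 = 0) :
    ∀ v, ∀ fuel, v ≤ fuel → rrtRepAux f fuel v = rrtRepAux f v v := by
  intro v
  induction v using Nat.strong_induction_on with
  | _ v ih =>
    intro fuel hfuel
    match v, fuel with
    | 0, 0 => rfl
    | 0, (m+1) => simp [rrtRepAux, hf0]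
    | (v'+1), (m+1) =>
      simp only [rrtRepAux]
      split
      · rfl
      · rename_i h
        have hlt : f (v'+1) < v'+1 := hf _ (by omega)
        rw [ih (f (v'+1)) hlt m (by omega), ih (f (v'+1)) hlt v' (by omega)]

lemma rep_eq (hf : ∀ w, 1 ≤ w → f w < w) (hf0 : f 0 = 0) (v : ℕ) :
    rrtRepAux f v v = if f v = 0 then v else rrtRepAux f (f v) (f v) := by
  match v with
  | 0 => simp [rrtRepAux, hf0]
  | (v'+1) =>
    simp only [rrtRepAux]
    split
    · rfl
    · exact repAux_fuel hf hf0 _ _ (by have := hf (v'+1) (by omega); omega)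

lemma rep_le (hf : ∀ w, 1 ≤ w → f w < w) (hf0 : f 0 = 0) (v : ℕ) :
    rrtRepAux f v v ≤ v := by
  induction v using Nat.strong_induction_on with
  | _ v ih =>
    rw [rep_eq hf hf0]
    split
    · exact le_rfl
    · rename_i h
      rcases Nat.eq_zero_or_pos v with h0 | h0
      · subst h0; exact absurd hf0 h
      · have hlt : f v < v := hf v h0
        exact le_trans (ih (f v) hlt) (le_of_lt hlt)

lemma rep_pos (hf : ∀ w, 1 ≤ w → f w < w) (hf0 : f 0 = 0) {v : ℕ} (hv : 1 ≤ v) :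
    1 ≤ rrtRepAux f v v := by
  induction v using Nat.strong_induction_on with
  | _ v ih =>
    rw [rep_eq hf hf0]
    split
    · exact hv
    · rename_i h
      exact ih (f v) (hf v hv) (by omega)

lemma parent_rep_eq_zero (hf : ∀ w, 1 ≤ w → f w < w) (hf0 : f 0 = 0) (v : ℕ) :
    f (rrtRepAux f v v) = 0 := by
  induction v using Nat.strong_induction_on with
  | _ v ih =>
    rw [rep_eq hf hf0]
    split
    · assumption
    · rename_i h
      rcases Nat.eq_zero_or_pos v with h0 | h0
      · subst h0; exact absurd hf0 h
      · exact ih (f v) (hf v h0)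

/-- locality: the representative of `v` only depends on `f` below `v`. -/
lemma rep_local (hf : ∀ w, 1 ≤ w → f w < w) (hf0 : f 0 = 0)
    (hg : ∀ w, 1 ≤ w → g w < w) (hg0 : g 0 = 0) :
    ∀ v, (∀ w, w ≤ v → f w = g w) → rrtRepAux f v v = rrtRepAux g v v := by
  intro v
  induction v using Nat.strong_induction_on with
  | _ v ih =>
    intro hagree
    rw [rep_eq hf hf0, rep_eq hg hg0, hagree v le_rfl]
    split
    · rfl
    · rename_i h
      rcases Nat.eq_zero_or_pos v with h0 | h0
      · subst h0; exact absurd hg0 h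
      · have hlt : g v < v := hg v h0
        exact ih (g v) hlt fun w hw => hagree w (by omega)

end RRTaux

namespace RRTaux

variable {k : ℕ}

lemma parent_lt (σ : RRTCode k) {v : ℕ} (hv : 1 ≤ v) : rrtParent σ v < v := by
  unfold rrtParent
  split
  · rename_i h
    have h2 : (σ ⟨v - 1, by omega⟩ : ℕ) < v - 1 + 1 := (σ ⟨v - 1, by omega⟩).isLt
    omega
  · omega

lemma parent_decr (σ : RRTCode k) : ∀ w, 1 ≤ w → rrtParent σ w < w :=
  fun _ hw => parent_lt σ hw

lemma parent_zero (σ : RRTCode k) : rrtParent σ 0 = 0 := by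
  unfold rrtParent; simp

/-- restriction of a code on `k+1` vertices-to-attach to one on `k` -/
def restrict (σ : RRTCode (k+1)) : RRTCode k := fun i => σ i.castSucc

lemma parent_restrict (σ : RRTCode (k+1)) {v : ℕ} (hv : v ≤ k) :
    rrtParent (restrict σ) v = rrtParent σ v := by
  unfold rrtParent restrict
  rcases Nat.eq_zero_or_pos v with h0 | h0
  · subst h0; simp
  · rw [dif_pos ⟨h0, hv⟩, dif_pos ⟨h0, by omega⟩]
    congr 1

lemma parent_top (σ : RRTCode (k+1)) : rrtParent σ (k+1) = (σ (Fin.last k) : ℕ) := by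
  unfold rrtParent
  rw [dif_pos ⟨by omega, le_rfl⟩]
  rfl

lemma rep_restrict (σ : RRTCode (k+1)) {v : ℕ} (hv : v ≤ k) :
    rrtRep (restrict σ) v = rrtRep σ v := by
  unfold rrtRep
  exact rep_local (parent_decr _) (parent_zero _) (parent_decr _) (parent_zero _) v
    (fun w hw => parent_restrict σ (by omega))

lemma rep_le' (σ : RRTCode k) (v : ℕ) : rrtRep σ v ≤ v :=
  rep_le (parent_decr σ) (parent_zero σ) v

lemma rep_pos' (σ : RRTCode k) {v : ℕ} (hv : 1 ≤ v) : 1 ≤ rrtRep σ v :=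
  rep_pos (parent_decr σ) (parent_zero σ) hv

lemma parent_rep (σ : RRTCode k) (v : ℕ) : rrtParent σ (rrtRep σ v) = 0 :=
  parent_rep_eq_zero (parent_decr σ) (parent_zero σ) v

lemma rep_eq' (σ : RRTCode k) (v : ℕ) :
    rrtRep σ v = if rrtParent σ v = 0 then v else rrtRep σ (rrtParent σ v) :=
  rep_eq (parent_decr σ) (parent_zero σ) v

lemma rep_top (σ : RRTCode (k+1)) :
    rrtRep σ (k+1) = if (σ (Fin.last k) : ℕ) = 0 then k+1
      else rrtRep (restrict σ) (σ (Fin.last k) : ℕ) := by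
  rw [rep_eq' σ (k+1), parent_top]
  split
  · rfl
  · rw [rep_restrict σ (by have := (σ (Fin.last k)).isLt; omega)]

end RRTaux

namespace RRTaux

variable {k : ℕ}

def blockCard (k : ℕ) (σ : RRTCode k) (c : ℕ) : ℕ :=
  ((Finset.Icc 1 k).filter fun v => rrtRep σ v = c).card

lemma rrtC_def (σ : RRTCode k) (j : ℕ) :
    rrtC k σ j = ((Finset.Icc 1 k).filter fun c =>
      rrtParent σ c = 0 ∧ blockCard k σ c = j).card := rfl

lemma Icc_succ_insert : Finset.Icc 1 (k+1) = insert (k+1) (Finset.Icc 1 k) := by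
  ext x; simp [Finset.mem_Icc, Finset.mem_insert]; omega

lemma blockCard_zero_of_gt (σ : RRTCode k) {c : ℕ} (hc : k < c) : blockCard k σ c = 0 := by
  unfold blockCard
  rw [Finset.card_eq_zero, Finset.filter_eq_empty_iff]
  intro v hv
  rw [Finset.mem_Icc] at hv
  have := rep_le' σ v
  omega

lemma blockCard_le (σ : RRTCode k) (c : ℕ) : blockCard k σ c ≤ k := by
  unfold blockCard
  calc _ ≤ (Finset.Icc 1 k).card := Finset.card_filter_le _ _
  _ = k := by simp

lemma rrtC_zero_of_gt (σ : RRTCode k) {j : ℕ} (hj : k < j) : rrtC k σ j = 0 := by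
  rw [rrtC_def, Finset.card_eq_zero, Finset.filter_eq_empty_iff]
  intro c _
  rintro ⟨-, hc⟩
  have := blockCard_le σ c
  omega

lemma blockCard_top (σ : RRTCode (k+1)) (c : ℕ) :
    blockCard (k+1) σ c
      = blockCard k (restrict σ) c + (if rrtRep σ (k+1) = c then 1 else 0) := by
  unfold blockCard
  rw [Icc_succ_insert, Finset.filter_insert]
  have hnm : (k+1) ∉ Finset.Icc 1 k := by simp
  have hfe : (Finset.Icc 1 k).filter (fun v => rrtRep σ v = c)
      = (Finset.Icc 1 k).filter (fun v => rrtRep (restrict σ) v = c) := by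
    apply Finset.filter_congr
    intro v hv
    rw [Finset.mem_Icc] at hv
    rw [rep_restrict σ hv.2]
  split
  · rw [Finset.card_insert_of_notMem (fun hmem => hnm (Finset.mem_of_mem_filter _ hmem)),
      hfe]
  · rw [hfe]; simp

/-- Case A : the last vertex attaches to the root. -/
lemma rrtC_top_caseA (σ : RRTCode (k+1)) (h : (σ (Fin.last k) : ℕ) = 0) (j : ℕ) :
    rrtC (k+1) σ j = rrtC k (restrict σ) j + (if j = 1 then 1 else 0) := by
  have hreptop : rrtRep σ (k+1) = k+1 := by rw [rep_top, if_pos h]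
  rw [rrtC_def, rrtC_def, Icc_succ_insert, Finset.filter_insert]
  have hnm : (k+1) ∉ Finset.Icc 1 k := by simp
  have hQtop : rrtParent σ (k+1) = 0 ∧ blockCard (k+1) σ (k+1) = j ↔ j = 1 := by
    rw [parent_top, h, blockCard_top, hreptop, if_pos rfl,
      blockCard_zero_of_gt (restrict σ) (by omega)]
    constructor
    · rintro ⟨-, h2⟩; omega
    · intro h2; exact ⟨rfl, by omega⟩
  have hfe : (Finset.Icc 1 k).filter
        (fun c => rrtParent σ c = 0 ∧ blockCard (k+1) σ c = j)
      = (Finset.Icc 1 k).filter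
        (fun c => rrtParent (restrict σ) c = 0 ∧ blockCard k (restrict σ) c = j) := by
    apply Finset.filter_congr
    intro c hc
    rw [Finset.mem_Icc] at hc
    rw [parent_restrict σ hc.2, blockCard_top, hreptop, if_neg (by omega)]
    simp
  split
  · rename_i hcond
    rw [Finset.card_insert_of_notMem (fun hmem => hnm (Finset.mem_of_mem_filter _ hmem)),
      hfe, if_pos (hQtop.1 hcond)]
  · rename_i hcond
    rw [hfe, if_neg (fun h1 => hcond (hQtop.2 h1))]
    simp

/-- Case B facts -/
lemma c0_mem (σ : RRTCode (k+1)) (h : (σ (Fin.last k) : ℕ) ≠ 0) :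
    rrtRep (restrict σ) (σ (Fin.last k) : ℕ) ∈ Finset.Icc 1 k := by
  rw [Finset.mem_Icc]
  have h1 := rep_pos' (restrict σ) (v := (σ (Fin.last k) : ℕ)) (by omega)
  have h2 := rep_le' (restrict σ) (σ (Fin.last k) : ℕ)
  have h3 : (σ (Fin.last k) : ℕ) < k + 1 := (σ (Fin.last k)).isLt
  exact ⟨h1, by omega⟩

lemma blockCard_pos (σ : RRTCode k) {c : ℕ} (hc1 : 1 ≤ c) (hc2 : c ≤ k)
    (hc : rrtParent σ c = 0) : 1 ≤ blockCard k σ c := by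
  refine Finset.card_pos.2 ⟨c, Finset.mem_filter.2 ⟨Finset.mem_Icc.2 ⟨hc1, hc2⟩, ?_⟩⟩
  rw [rep_eq', if_pos hc]

/-- Case B : the last vertex attaches to a non-root vertex. -/
lemma rrtC_top_caseB (σ : RRTCode (k+1)) (h : (σ (Fin.last k) : ℕ) ≠ 0) (j : ℕ) :
    rrtC (k+1) σ j
        + (if j = blockCard k (restrict σ) (rrtRep (restrict σ) (σ (Fin.last k) : ℕ))
           then 1 else 0)
      = rrtC k (restrict σ) j
        + (if j = blockCard k (restrict σ) (rrtRep (restrict σ) (σ (Fin.last k) : ℕ)) + 1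
           then 1 else 0) := by
  set σ' := restrict σ with hσ'
  set c0 := rrtRep σ' (σ (Fin.last k) : ℕ) with hc0
  set s := blockCard k σ' c0 with hs
  have hc0mem : c0 ∈ Finset.Icc 1 k := c0_mem σ h
  have hc0p : rrtParent σ' c0 = 0 := parent_rep σ' _
  have hreptop : rrtRep σ (k+1) = c0 := by rw [rep_top, if_neg h]
  -- both sides computed to a common sum over the erase
  have key : ∀ c ∈ (Finset.Icc 1 k).erase c0,
      ((rrtParent σ c = 0 ∧ blockCard (k+1) σ c = j) ↔
       (rrtParent σ' c = 0 ∧ blockCard k σ' c = j)) := by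
    intro c hc
    have hcne : c ≠ c0 := (Finset.mem_erase.1 hc).1
    have hcm := Finset.mem_Icc.1 (Finset.mem_erase.1 hc).2
    rw [parent_restrict σ hcm.2, blockCard_top, hreptop, if_neg (fun hh => hcne hh.symm)]
    simp [hσ']
  have hLHS : rrtC (k+1) σ j
      = (∑ c ∈ (Finset.Icc 1 k).erase c0,
          if rrtParent σ' c = 0 ∧ blockCard k σ' c = j then 1 else 0)
        + (if j = s + 1 then 1 else 0) := by
    have hQc0 : (rrtParent σ c0 = 0 ∧ blockCard (k+1) σ c0 = j) ↔ j = s + 1 := by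
      have hc0m := Finset.mem_Icc.1 hc0mem
      rw [← parent_restrict σ hc0m.2, blockCard_top, hreptop, if_pos rfl, ← hσ', ← hs]
      constructor
      · rintro ⟨-, hh⟩; omega
      · intro hh; exact ⟨hc0p, by omega⟩
    rw [rrtC_def, Icc_succ_insert, Finset.filter_insert,
      if_neg (by rw [parent_top]; exact fun hh => h hh.1), Finset.card_filter,
      ← Finset.sum_erase_add _ _ hc0mem]
    congr 1
    · exact Finset.sum_congr rfl (fun c hc => if_congr (key c hc) rfl rfl)
    · exact if_congr hQc0 rfl rfl
  have hRHS : rrtC k σ' j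
      = (∑ c ∈ (Finset.Icc 1 k).erase c0,
          if rrtParent σ' c = 0 ∧ blockCard k σ' c = j then 1 else 0)
        + (if j = s then 1 else 0) := by
    have hQc0 : (rrtParent σ' c0 = 0 ∧ blockCard k σ' c0 = j) ↔ j = s := by
      constructor
      · rintro ⟨-, hh⟩; omega
      · intro hh; exact ⟨hc0p, by omega⟩
    rw [rrtC_def, Finset.card_filter, ← Finset.sum_erase_add _ _ hc0mem]
    congr 1
    exact if_congr hQc0 rfl rfl
  rw [hLHS, hRHS]
  have : s + 1 ≠ s := by omega
  split <;> split <;> omega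

end RRTaux

namespace RRTaux

variable {k : ℕ}

def extend (τ : RRTCode k) (t : Fin (k+1)) : RRTCode (k+1) :=
  Fin.snoc (α := fun i : Fin (k+1) => Fin (i.val + 1)) τ t

lemma restrict_extend (τ : RRTCode k) (t : Fin (k+1)) : restrict (extend τ t) = τ := by
  funext i
  exact Fin.snoc_castSucc (α := fun i : Fin (k+1) => Fin (i.val + 1)) (p := τ) (x := t) (i := i)

lemma extend_last (τ : RRTCode k) (t : Fin (k+1)) : extend τ t (Fin.last k) = t :=
  Fin.snoc_last (α := fun i : Fin (k+1) => Fin (i.val + 1)) (p := τ) (x := t)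

def extEquiv : (RRTCode k × Fin (k+1)) ≃ RRTCode (k+1) where
  toFun p := extend p.1 p.2
  invFun σ := (restrict σ, σ (Fin.last k))
  left_inv p := by
    ext1
    · exact restrict_extend p.1 p.2
    · exact extend_last p.1 p.2
  right_inv σ := by
    funext i
    refine Fin.lastCases ?_ ?_ i
    · exact extend_last _ _
    · intro j
      exact Fin.snoc_castSucc (α := fun i : Fin (k+1) => Fin (i.val + 1))
        (p := restrict σ) (x := σ (Fin.last k)) (i := j)

lemma card_filter_split (P : RRTCode (k+1) → Prop) [DecidablePred P] :
    (Finset.univ.filter P).card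
      = ∑ τ : RRTCode k, ∑ t : Fin (k+1), if P (extend τ t) then 1 else 0 := by
  rw [Finset.card_filter]
  rw [← Equiv.sum_comp (extEquiv (k := k)) (fun σ => if P σ then 1 else 0)]
  rw [Fintype.sum_prod_type]
  rfl

/-- counting vertices in blocks of size `s`. -/
lemma count_attach (τ : RRTCode k) (s : ℕ) :
    (Finset.univ.filter fun t : Fin k =>
        blockCard k τ (rrtRep τ (t.val+1)) = s).card = s * rrtC k τ s := by
  have h1 : (Finset.univ.filter fun t : Fin k =>
        blockCard k τ (rrtRep τ (t.val+1)) = s).card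
      = ((Finset.Icc 1 k).filter fun v => blockCard k τ (rrtRep τ v) = s).card := by
    apply Finset.card_bij (fun t _ => t.val + 1)
    · intro t ht
      rw [Finset.mem_filter] at ht ⊢
      exact ⟨Finset.mem_Icc.2 ⟨by omega, by have := t.isLt; omega⟩, ht.2⟩
    · intro t₁ _ t₂ _ h
      exact Fin.ext (by omega)
    · intro v hv
      rw [Finset.mem_filter, Finset.mem_Icc] at hv
      refine ⟨⟨v - 1, by omega⟩, Finset.mem_filter.2 ⟨Finset.mem_univ _, ?_⟩, by show v - 1 + 1 = v; omega⟩
      have : v - 1 + 1 = v := by omega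
      rw [this]
      exact hv.2
  rw [h1]
  set Rs := (Finset.Icc 1 k).filter
      (fun c => rrtParent τ c = 0 ∧ blockCard k τ c = s) with hRs
  have h2 : ((Finset.Icc 1 k).filter fun v => blockCard k τ (rrtRep τ v) = s).card
      = ∑ c ∈ Rs, (((Finset.Icc 1 k).filter fun v => blockCard k τ (rrtRep τ v) = s).filter
          fun v => rrtRep τ v = c).card := by
    apply Finset.card_eq_sum_card_fiberwise
    intro v hv
    rw [Finset.mem_coe, Finset.mem_filter] at hv
    have hvm := Finset.mem_Icc.1 hv.1
    rw [hRs, Finset.mem_coe, Finset.mem_filter, Finset.mem_Icc]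
    have hle := rep_le' τ v
    exact ⟨⟨rep_pos' τ hvm.1, by omega⟩, parent_rep τ v, hv.2⟩
  rw [h2]
  have h3 : ∀ c ∈ Rs, (((Finset.Icc 1 k).filter fun v => blockCard k τ (rrtRep τ v) = s).filter
      fun v => rrtRep τ v = c).card = s := by
    intro c hc
    rw [hRs, Finset.mem_filter] at hc
    rw [Finset.filter_filter]
    have : ((Finset.Icc 1 k).filter fun v =>
        blockCard k τ (rrtRep τ v) = s ∧ rrtRep τ v = c)
        = (Finset.Icc 1 k).filter fun v => rrtRep τ v = c := by
      apply Finset.filter_congr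
      intro v _
      constructor
      · exact fun h => h.2
      · intro h
        refine ⟨?_, h⟩
        rw [h]
        exact hc.2.2
    rw [this]
    exact hc.2.2
  rw [Finset.sum_congr rfl h3, Finset.sum_const, smul_eq_mul, rrtC_def, mul_comm]

end RRTaux

namespace RRTaux

variable {k : ℕ}

open Classical in
noncomputable def ind (p : Prop) : ℕ := if p then 1 else 0

noncomputable def Ncount (k : ℕ) (a : ℕ → ℕ) : ℕ :=
  ∑ σ : RRTCode k, ind (∀ j ∈ Finset.Icc 1 k, rrtC k σ j = a j)

lemma ind_pos {p : Prop} (h : p) : ind p = 1 := by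
  unfold ind; split
  · rfl
  · rename_i hn; exact absurd h hn
lemma ind_neg {p : Prop} (h : ¬ p) : ind p = 0 := by
  unfold ind; split
  · rename_i hp; exact absurd hp h
  · rfl
lemma ind_congr {p q : Prop} (h : p ↔ q) : ind p = ind q := by
  unfold ind
  split
  · rename_i hp
    split
    · rfl
    · rename_i hq; exact absurd (h.1 hp) hq
  · rename_i hp
    split
    · rename_i hq; exact absurd (h.2 hq) hp
    · rfl

def condBP (k : ℕ) (a : ℕ → ℕ) (s : ℕ) (τ : RRTCode k) : Prop :=
  ∀ j ∈ Finset.Icc 1 (k+1),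
    rrtC k τ j + (if j = s+1 then 1 else 0) = a j + (if j = s then 1 else 0)

lemma caseA' (τ : RRTCode k) (j : ℕ) :
    rrtC (k+1) (extend τ 0) j = rrtC k τ j + (if j = 1 then 1 else 0) := by
  have h := rrtC_top_caseA (extend τ 0) (by rw [extend_last]; rfl) j
  rwa [restrict_extend] at h

lemma caseB' (τ : RRTCode k) (t : Fin k) (j : ℕ) :
    rrtC (k+1) (extend τ t.succ) j
        + (if j = blockCard k τ (rrtRep τ (t.val+1)) then 1 else 0)
      = rrtC k τ j
        + (if j = blockCard k τ (rrtRep τ (t.val+1)) + 1 then 1 else 0) := by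
  have h := rrtC_top_caseB (extend τ t.succ)
    (by rw [extend_last]; simp [Fin.val_succ]) j
  rw [restrict_extend, extend_last] at h
  simpa [Fin.val_succ] using h

lemma sOf_mem (τ : RRTCode k) (t : Fin k) :
    blockCard k τ (rrtRep τ (t.val+1)) ∈ Finset.Icc 1 k := by
  have ht : t.val + 1 ≤ k := t.isLt
  have h1 := rep_pos' τ (v := t.val + 1) (by omega)
  have h2 := rep_le' τ (t.val + 1)
  rw [Finset.mem_Icc]
  exact ⟨blockCard_pos τ h1 (by omega) (parent_rep τ _), blockCard_le τ _⟩

lemma card_filter_split' (k : ℕ) (a : ℕ → ℕ) :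
    Ncount (k+1) a = ∑ τ : RRTCode k, ∑ t : Fin (k+1),
      ind (∀ j ∈ Finset.Icc 1 (k+1), rrtC (k+1) (extend τ t) j = a j) := by
  rw [Ncount,
    ← Equiv.sum_comp (extEquiv (k := k))
      (fun σ => ind (∀ j ∈ Finset.Icc 1 (k+1), rrtC (k+1) σ j = a j)),
    Fintype.sum_prod_type]
  rfl

lemma sum_ind_eq_Ncount (k : ℕ) (b : ℕ → ℕ) :
    (∑ τ : RRTCode k, ind (∀ j ∈ Finset.Icc 1 k, rrtC k τ j = b j)) = Ncount k b := rfl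

theorem Ncount_rec (k : ℕ) (hk : 1 ≤ k) (a : ℕ → ℕ) :
    Ncount (k+1) a =
      (if a (k+1) = 0 ∧ 1 ≤ a 1
        then Ncount k (fun j => if j = 1 then a 1 - 1 else a j) else 0)
      + ∑ s ∈ Finset.Icc 1 k, s * (a s + 1) *
          (if a (k+1) = (if s = k then 1 else 0) ∧ 1 ≤ a (s+1)
            then Ncount k
              (fun j => if j = s then a s + 1 else if j = s+1 then a (s+1) - 1 else a j)
            else 0) := by
  rw [card_filter_split']
  have hsplit : ∀ τ : RRTCode k,
      (∑ t : Fin (k+1),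
          ind (∀ j ∈ Finset.Icc 1 (k+1), rrtC (k+1) (extend τ t) j = a j))
        = ind (∀ j ∈ Finset.Icc 1 (k+1), rrtC (k+1) (extend τ 0) j = a j)
          + ∑ t : Fin k,
              ind (∀ j ∈ Finset.Icc 1 (k+1), rrtC (k+1) (extend τ t.succ) j = a j) :=
    fun τ => Fin.sum_univ_succ _
  rw [Finset.sum_congr rfl fun τ _ => hsplit τ, Finset.sum_add_distrib]
  congr 1
  -- ## Case A : last vertex attaches to the root
  · have hA : ∀ τ : RRTCode k,
        (∀ j ∈ Finset.Icc 1 (k+1), rrtC (k+1) (extend τ 0) j = a j) ↔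
        (a (k+1) = 0 ∧ 1 ≤ a 1 ∧
          ∀ j ∈ Finset.Icc 1 k, rrtC k τ j = (if j = 1 then a 1 - 1 else a j)) := by
      intro τ
      simp only [caseA']
      rw [Icc_succ_insert, Finset.forall_mem_insert]
      have htop : rrtC k τ (k+1) = 0 := rrtC_zero_of_gt τ (by omega)
      constructor
      · rintro ⟨h1, h2⟩
        have h3 := h2 1 (Finset.mem_Icc.2 ⟨le_rfl, hk⟩)
        rw [htop, if_neg (by omega : ¬ (k+1 = 1))] at h1
        rw [if_pos rfl] at h3
        refine ⟨by omega, by omega, ?_⟩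
        intro j hj
        have h4 := h2 j hj
        by_cases hj1 : j = 1
        · rw [if_pos hj1]; subst hj1; rw [if_pos rfl] at h4; omega
        · rw [if_neg hj1]; rw [if_neg hj1] at h4; omega
      · rintro ⟨h1, h2, h3⟩
        constructor
        · rw [htop, if_neg (by omega : ¬ (k+1 = 1))]; omega
        · intro j hj
          have h4 := h3 j hj
          by_cases hj1 : j = 1
          · subst hj1; rw [if_pos rfl] at h4 ⊢; omega
          · rw [if_neg hj1] at h4 ⊢; omega
    by_cases hc : a (k+1) = 0 ∧ 1 ≤ a 1
    · rw [if_pos hc, ← sum_ind_eq_Ncount k (fun j => if j = 1 then a 1 - 1 else a j)]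
      apply Finset.sum_congr rfl
      intro τ _
      apply ind_congr
      rw [hA τ]
      constructor
      · rintro ⟨-, -, h⟩; exact h
      · intro h; exact ⟨hc.1, hc.2, h⟩
    · rw [if_neg hc]
      apply Finset.sum_eq_zero
      intro τ _
      exact ind_neg (fun hp => hc ⟨((hA τ).1 hp).1, ((hA τ).1 hp).2.1⟩)
  -- ## Case B : last vertex attaches to a non-root vertex
  · have hB1 : ∀ (τ : RRTCode k) (t : Fin k),
        (∀ j ∈ Finset.Icc 1 (k+1), rrtC (k+1) (extend τ t.succ) j = a j) ↔
        condBP k a (blockCard k τ (rrtRep τ (t.val+1))) τ := by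
      intro τ t
      constructor
      · intro h j hj
        rw [← h j hj]
        exact (caseB' τ t j).symm
      · intro h j hj
        have h1 := caseB' τ t j
        have h2 := h j hj
        omega
    have hB3 : ∀ s, s ∈ Finset.Icc 1 k → ∀ τ : RRTCode k, condBP k a s τ ↔
        (a (k+1) = (if s = k then 1 else 0) ∧ 1 ≤ a (s+1) ∧
          ∀ j ∈ Finset.Icc 1 k, rrtC k τ j =
            (if j = s then a s + 1 else if j = s+1 then a (s+1) - 1 else a j)) := by
      intro s hs τ
      rw [Finset.mem_Icc] at hs
      unfold condBP
      rw [Icc_succ_insert, Finset.forall_mem_insert]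
      have htop : rrtC k τ (k+1) = 0 := rrtC_zero_of_gt τ (by omega)
      constructor
      · rintro ⟨h1, h2⟩
        rw [htop, if_neg (by omega : ¬(k+1 = s))] at h1
        have ha : a (k+1) = if s = k then 1 else 0 := by
          by_cases hsk : s = k
          · rw [if_pos hsk]; rw [if_pos (by omega)] at h1; omega
          · rw [if_neg hsk]; rw [if_neg (by omega)] at h1; omega
        have hs1 : 1 ≤ a (s+1) := by
          by_cases hsk : s = k
          · rw [if_pos hsk] at ha; subst hsk; omega
          · have h3 := h2 (s+1) (Finset.mem_Icc.2 ⟨by omega, by omega⟩)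
            rw [if_pos rfl, if_neg (by omega)] at h3
            omega
        refine ⟨ha, hs1, ?_⟩
        intro j hj
        have h4 := h2 j hj
        by_cases hjs : j = s
        · rw [if_pos hjs]; subst hjs; rw [if_neg (by omega), if_pos rfl] at h4; omega
        · rw [if_neg hjs]
          by_cases hjs1 : j = s+1
          · rw [if_pos hjs1]; subst hjs1; rw [if_pos rfl, if_neg (by omega)] at h4; omega
          · rw [if_neg hjs1]; rw [if_neg hjs1, if_neg hjs] at h4; omega
      · rintro ⟨h1, h2, h3⟩
        constructor
        · rw [htop, if_neg (by omega : ¬(k+1 = s))]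
          by_cases hsk : s = k
          · rw [if_pos (by omega : k+1 = s+1)]; rw [if_pos hsk] at h1; omega
          · rw [if_neg (by omega : ¬(k+1 = s+1))]; rw [if_neg hsk] at h1; omega
        · intro j hj
          have h4 := h3 j hj
          by_cases hjs : j = s
          · subst hjs; rw [if_pos rfl] at h4; rw [if_neg (by omega), if_pos rfl]; omega
          · by_cases hjs1 : j = s+1
            · subst hjs1; rw [if_neg (by omega), if_pos rfl] at h4
              rw [if_pos rfl, if_neg (by omega)]; omega
            · rw [if_neg hjs, if_neg hjs1] at h4; rw [if_neg hjs1, if_neg hjs]; omega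
    have hB2 : ∀ τ : RRTCode k,
        (∑ t : Fin k,
            ind (∀ j ∈ Finset.Icc 1 (k+1), rrtC (k+1) (extend τ t.succ) j = a j))
          = ∑ s ∈ Finset.Icc 1 k, ind (condBP k a s τ) * (s * (a s + 1)) := by
      intro τ
      have e1 : ∀ t : Fin k,
          ind (∀ j ∈ Finset.Icc 1 (k+1), rrtC (k+1) (extend τ t.succ) j = a j)
          = ∑ s ∈ Finset.Icc 1 k,
              if blockCard k τ (rrtRep τ (t.val+1)) = s
                then ind (condBP k a s τ) else 0 := by
        intro t
        rw [Finset.sum_ite_eq, if_pos (sOf_mem τ t)]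
        exact ind_congr (hB1 τ t)
      rw [Finset.sum_congr rfl fun t _ => e1 t, Finset.sum_comm]
      apply Finset.sum_congr rfl
      intro s hs
      rw [← Finset.sum_filter, Finset.sum_const, smul_eq_mul, count_attach]
      by_cases hcb : condBP k a s τ
      · have hval : rrtC k τ s = a s + 1 := by
          have h4 := hcb s (Finset.mem_Icc.2
            (by have := Finset.mem_Icc.1 hs; omega))
          rw [if_neg (by omega : ¬ s = s + 1), if_pos rfl] at h4
          omega
        rw [ind_pos hcb, hval]
        ring
      · rw [ind_neg hcb]
        simp
    rw [Finset.sum_congr rfl fun τ _ => hB2 τ, Finset.sum_comm]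
    apply Finset.sum_congr rfl
    intro s hs
    rw [← Finset.sum_mul]
    by_cases hcs : a (k+1) = (if s = k then 1 else 0) ∧ 1 ≤ a (s+1)
    · rw [if_pos hcs, ← sum_ind_eq_Ncount k
        (fun j => if j = s then a s + 1 else if j = s+1 then a (s+1) - 1 else a j)]
      have e2 : (∑ τ : RRTCode k, ind (condBP k a s τ))
          = ∑ τ : RRTCode k, ind (∀ j ∈ Finset.Icc 1 k, rrtC k τ j =
              (if j = s then a s + 1 else if j = s+1 then a (s+1) - 1 else a j)) := by
        apply Finset.sum_congr rfl
        intro τ _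
        apply ind_congr
        rw [hB3 s hs τ]
        constructor
        · rintro ⟨-, -, h⟩; exact h
        · intro h; exact ⟨hcs.1, hcs.2, h⟩
      rw [e2]
      ring
    · rw [if_neg hcs, mul_zero]
      have e3 : (∑ τ : RRTCode k, ind (condBP k a s τ)) = 0 := by
        apply Finset.sum_eq_zero
        intro τ _
        exact ind_neg (fun hp =>
          hcs ⟨((hB3 s hs τ).1 hp).1, ((hB3 s hs τ).1 hp).2.1⟩)
      rw [e3, zero_mul]

end RRTaux

namespace RRTaux

open Nat

variable {k : ℕ}

lemma card_RRT (k : ℕ) : Fintype.card (RRTCode k) = k ! := by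
  induction k with
  | zero =>
    rw [Nat.factorial_zero, Fintype.card_eq_one_iff]
    exact ⟨fun i => i.elim0, fun σ => funext fun i => i.elim0⟩
  | succ k ih =>
    rw [← Fintype.card_congr (extEquiv (k := k)), Fintype.card_prod, Fintype.card_fin, ih,
      Nat.factorial_succ, mul_comm]

lemma sum_shift (a : ℕ → ℕ) (k : ℕ) :
    (∑ j ∈ Finset.Icc 1 (k+1), j * a j)
      = 1 * a 1 + ∑ s ∈ Finset.Icc 1 k, (s+1) * a (s+1) := by
  induction k with
  | zero => simp
  | succ n ih =>
    rw [Icc_succ_insert (k := n+1), Finset.sum_insert (by simp), ih,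
      Icc_succ_insert (k := n), Finset.sum_insert (by simp)]
    ring

lemma sum_update_one (S : Finset ℕ) (f g : ℕ → ℕ) (x : ℕ) (hx : x ∈ S)
    (h : ∀ j ∈ S, j ≠ x → f j = g j) :
    (∑ j ∈ S, f j) + g x = (∑ j ∈ S, g j) + f x := by
  rw [← Finset.sum_erase_add S f hx, ← Finset.sum_erase_add S g hx,
    Finset.sum_congr rfl (fun j hj => h j (Finset.mem_of_mem_erase hj)
      (Finset.ne_of_mem_erase hj))]
  ring

lemma sum_update_two (S : Finset ℕ) (f g : ℕ → ℕ) (x y : ℕ) (hx : x ∈ S) (hy : y ∈ S)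
    (hxy : x ≠ y) (h : ∀ j ∈ S, j ≠ x → j ≠ y → f j = g j) :
    (∑ j ∈ S, f j) + g x + g y = (∑ j ∈ S, g j) + f x + f y := by
  have hy' : y ∈ S.erase x := Finset.mem_erase.2 ⟨fun hh => hxy hh.symm, hy⟩
  rw [← Finset.sum_erase_add S f hx, ← Finset.sum_erase_add S g hx,
    ← Finset.sum_erase_add (S.erase x) f hy', ← Finset.sum_erase_add (S.erase x) g hy',
    Finset.sum_congr rfl (fun j hj => h j
      (Finset.mem_of_mem_erase (Finset.mem_of_mem_erase hj))
      (Finset.ne_of_mem_erase (Finset.mem_of_mem_erase hj))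
      (Finset.ne_of_mem_erase hj))]
  ring

lemma prod_update_one (S : Finset ℕ) (F G : ℕ → ℝ) (x : ℕ) (hx : x ∈ S)
    (h : ∀ j ∈ S, j ≠ x → F j = G j) :
    (∏ j ∈ S, F j) * G x = (∏ j ∈ S, G j) * F x := by
  rw [← Finset.prod_erase_mul S F hx, ← Finset.prod_erase_mul S G hx,
    Finset.prod_congr rfl (fun j hj => h j (Finset.mem_of_mem_erase hj)
      (Finset.ne_of_mem_erase hj))]
  ring

lemma prod_update_two (S : Finset ℕ) (F G : ℕ → ℝ) (x y : ℕ) (hx : x ∈ S) (hy : y ∈ S)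
    (hxy : x ≠ y) (h : ∀ j ∈ S, j ≠ x → j ≠ y → F j = G j) :
    (∏ j ∈ S, F j) * G x * G y = (∏ j ∈ S, G j) * F x * F y := by
  have hy' : y ∈ S.erase x := Finset.mem_erase.2 ⟨fun hh => hxy hh.symm, hy⟩
  rw [← Finset.prod_erase_mul S F hx, ← Finset.prod_erase_mul S G hx,
    ← Finset.prod_erase_mul (S.erase x) F hy', ← Finset.prod_erase_mul (S.erase x) G hy',
    Finset.prod_congr rfl (fun j hj => h j
      (Finset.mem_of_mem_erase (Finset.mem_of_mem_erase hj))
      (Finset.ne_of_mem_erase (Finset.mem_of_mem_erase hj))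
      (Finset.ne_of_mem_erase hj))]
  ring

/-- the generic factor -/
noncomputable def Pfac (a : ℕ → ℕ) (j : ℕ) : ℝ := 1 / ((j : ℝ) ^ (a j) * (Nat.factorial (a j) : ℝ))

lemma Pfac_ne_zero (a : ℕ → ℕ) {j : ℕ} (hj : 1 ≤ j) : Pfac a j ≠ 0 := by
  unfold Pfac
  have h1 : (0:ℝ) < (j:ℝ) ^ (a j) := pow_pos (by exact_mod_cast hj) _
  have h2 : (0:ℝ) < (Nat.factorial (a j) : ℝ) := by exact_mod_cast Nat.factorial_pos (a j)
  positivity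

lemma Pfac_pos (a : ℕ → ℕ) {j : ℕ} (hj : 1 ≤ j) : 0 < Pfac a j := by
  unfold Pfac
  have h1 : (0:ℝ) < (j:ℝ) ^ (a j) := pow_pos (by exact_mod_cast hj) _
  have h2 : (0:ℝ) < (Nat.factorial (a j) : ℝ) := by exact_mod_cast Nat.factorial_pos (a j)
  positivity

/-- factor identity at `j`: decreasing the count by one. -/
lemma fac_dec {x n : ℕ} (hx : 1 ≤ x) (hn : 1 ≤ n) :
    (1 : ℝ) / ((x:ℝ)^(n-1) * (Nat.factorial (n-1) : ℝ))
      = ((x:ℝ) * (n:ℝ)) * (1 / ((x:ℝ)^n * (n ! : ℝ))) := by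
  have hx0 : (x:ℝ) ≠ 0 := by positivity
  have hxp : (x:ℝ)^(n-1) ≠ 0 := pow_ne_zero _ hx0
  have hf : (Nat.factorial (n-1) : ℝ) ≠ 0 := by
    exact_mod_cast (Nat.factorial_pos (n-1)).ne'
  have hpow : (x:ℝ)^n = (x:ℝ)^(n-1) * (x:ℝ) := by
    rw [← pow_succ]
    congr 1
    omega
  have hfact : (n ! : ℝ) = (n : ℝ) * (Nat.factorial (n-1) : ℝ) := by
    rw [← Nat.cast_mul]
    congr 1
    rw [Nat.mul_factorial_pred (by omega)]
  rw [hpow, hfact]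
  field_simp

/-- factor identity at `j`: increasing the count by one. -/
lemma fac_inc {x n : ℕ} (hx : 1 ≤ x) :
    (1 : ℝ) / ((x:ℝ)^(n+1) * (Nat.factorial (n+1) : ℝ)) * ((x:ℝ) * ((n:ℝ)+1))
      = 1 / ((x:ℝ)^n * (n ! : ℝ)) := by
  have hx0 : (x:ℝ) ≠ 0 := by positivity
  have hf : (n ! : ℝ) ≠ 0 := by exact_mod_cast (Nat.factorial_pos n).ne'
  have hfact : (Nat.factorial (n+1) : ℝ) = ((n:ℝ)+1) * (n ! : ℝ) := by
    rw [Nat.factorial_succ]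
    push_cast
    ring
  rw [pow_succ, hfact]
  field_simp

end RRTaux

namespace RRTaux

open Nat

lemma rrtC_one (σ : RRTCode 1) : rrtC 1 σ 1 = 1 := by
  have hpar : rrtParent σ 1 = 0 := by
    unfold rrtParent
    rw [dif_pos ⟨le_rfl, le_rfl⟩]
    exact Nat.lt_one_iff.mp ((σ ⟨1-1, by omega⟩).isLt)
  have hrep : rrtRep σ 1 = 1 := by rw [rep_eq' σ 1, if_pos hpar]
  have hbc : blockCard 1 σ 1 = 1 := by
    unfold blockCard
    rw [Finset.Icc_self, Finset.filter_singleton, if_pos hrep]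
    rfl
  rw [rrtC_def, Finset.Icc_self, Finset.filter_singleton, if_pos ⟨hpar, hbc⟩]
  rfl

theorem main_formula : ∀ (k : ℕ) (a : ℕ → ℕ),
    (Ncount k a : ℝ) =
      if (∑ j ∈ Finset.Icc 1 k, j * a j) = k
        then (k ! : ℝ) * ∏ j ∈ Finset.Icc 1 k, Pfac a j
        else 0 := by
  intro k
  induction k with
  | zero =>
    intro a
    have h1 : Ncount 0 a = 1 := by
      rw [Ncount, Finset.sum_congr rfl fun σ _ =>
          ind_pos (p := ∀ j ∈ Finset.Icc 1 0, rrtC 0 σ j = a j) (by simp),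
        Finset.sum_const, smul_eq_mul, mul_one, Finset.card_univ, card_RRT,
        Nat.factorial_zero]
    rw [h1, if_pos (by simp)]
    simp
  | succ k IH =>
    intro a
    rcases Nat.eq_zero_or_pos k with rfl | hk
    · -- the case `k + 1 = 1`
      have hN1 : Ncount 1 a = if a 1 = 1 then 1 else 0 := by
        have hterm : ∀ σ : RRTCode 1,
            ind (∀ j ∈ Finset.Icc 1 1, rrtC 1 σ j = a j)
              = if a 1 = 1 then 1 else 0 := by
          intro σ
          have hiff : (∀ j ∈ Finset.Icc 1 1, rrtC 1 σ j = a j) ↔ a 1 = 1 := by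
            constructor
            · intro h
              have h1 := h 1 (by simp)
              rw [rrtC_one σ] at h1
              omega
            · intro h j hj
              have : j = 1 := by rw [Finset.mem_Icc] at hj; omega
              subst this
              rw [rrtC_one σ, h]
          by_cases h : a 1 = 1
          · rw [if_pos h]; exact ind_pos (hiff.2 h)
          · rw [if_neg h]; exact ind_neg (fun hp => h (hiff.1 hp))
        rw [Ncount, Finset.sum_congr rfl fun σ _ => hterm σ, Finset.sum_const,
          Finset.card_univ, card_RRT, Nat.factorial_one, one_smul]
      have hcond : ((∑ j ∈ Finset.Icc 1 1, j * a j) = 1) ↔ a 1 = 1 := by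
        rw [Finset.Icc_self, Finset.sum_singleton]; omega
      rw [hN1]
      by_cases h : a 1 = 1
      · rw [if_pos h, if_pos (hcond.2 h), Finset.Icc_self, Finset.prod_singleton]
        simp [Pfac, h]
      · rw [if_neg h, if_neg (fun hc => h (hcond.1 hc))]
        simp
    · -- the general case `k ≥ 1`
      rw [Ncount_rec k hk a]
      push_cast
      rw [IH (fun j => if j = 1 then a 1 - 1 else a j)]
      have mem1 : (1:ℕ) ∈ Finset.Icc 1 k := Finset.mem_Icc.2 ⟨le_rfl, hk⟩
      have hsplit : (∑ j ∈ Finset.Icc 1 (k+1), j * a j)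
          = (∑ j ∈ Finset.Icc 1 k, j * a j) + (k+1) * a (k+1) := by
        rw [Icc_succ_insert, Finset.sum_insert (by simp)]
        ring
      -- ### term A
      have TA : (if a (k + 1) = 0 ∧ 1 ≤ a 1 then
            (if (∑ j ∈ Finset.Icc 1 k, j * if j = 1 then a 1 - 1 else a j) = k then
              (k ! : ℝ) * ∏ j ∈ Finset.Icc 1 k, Pfac (fun j => if j = 1 then a 1 - 1 else a j) j
            else 0)
          else (0:ℝ))
          = (a 1 : ℝ) * (if (∑ j ∈ Finset.Icc 1 (k+1), j * a j) = k + 1 then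
              (k ! : ℝ) * ∏ j ∈ Finset.Icc 1 (k+1), Pfac a j else 0) := by
        by_cases hc1 : a (k+1) = 0 ∧ 1 ≤ a 1
        · have hsum1 : (∑ j ∈ Finset.Icc 1 k, j * (if j = 1 then a 1 - 1 else a j)) + 1 * a 1
              = (∑ j ∈ Finset.Icc 1 k, j * a j) + 1 * (if (1:ℕ) = 1 then a 1 - 1 else a 1) :=
            sum_update_one (Finset.Icc 1 k) (fun j => j * if j = 1 then a 1 - 1 else a j)
              (fun j => j * a j) 1 mem1 (fun j _ hne => by simp only [if_neg hne])
          rw [if_pos rfl] at hsum1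
          have hiff : ((∑ j ∈ Finset.Icc 1 k, j * (if j = 1 then a 1 - 1 else a j)) = k)
              ↔ ((∑ j ∈ Finset.Icc 1 (k+1), j * a j) = k+1) := by
            rw [hsplit, hc1.1, Nat.mul_zero, Nat.add_zero]
            have h2 := hc1.2
            omega
          rw [if_pos hc1]
          by_cases hC : (∑ j ∈ Finset.Icc 1 (k+1), j * a j) = k+1
          · rw [if_pos (hiff.2 hC), if_pos hC]
            have hup : (∏ j ∈ Finset.Icc 1 k, Pfac (fun j => if j = 1 then a 1 - 1 else a j) j)
                  * Pfac a 1
                = (∏ j ∈ Finset.Icc 1 k, Pfac a j)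
                  * Pfac (fun j => if j = 1 then a 1 - 1 else a j) 1 :=
              prod_update_one (Finset.Icc 1 k)
                (Pfac (fun j => if j = 1 then a 1 - 1 else a j)) (Pfac a) 1 mem1
                (fun j _ hne => by unfold Pfac; simp only [if_neg hne])
            have hfd : Pfac (fun j => if j = 1 then a 1 - 1 else a j) 1
                = (a 1 : ℝ) * Pfac a 1 := by
              unfold Pfac
              have hb1 : (fun j => if j = 1 then a 1 - 1 else a j) 1 = a 1 - 1 := by simp
              rw [hb1, fac_dec (x := 1) (n := a 1) le_rfl hc1.2]
              push_cast
              ring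
            have hPne := Pfac_ne_zero a (j := 1) le_rfl
            have hprod : (∏ j ∈ Finset.Icc 1 k, Pfac (fun j => if j = 1 then a 1 - 1 else a j) j)
                = (a 1 : ℝ) * ∏ j ∈ Finset.Icc 1 k, Pfac a j := by
              apply mul_right_cancel₀ hPne
              rw [hup, hfd]
              ring
            have hfull : (∏ j ∈ Finset.Icc 1 (k+1), Pfac a j)
                = ∏ j ∈ Finset.Icc 1 k, Pfac a j := by
              rw [Icc_succ_insert, Finset.prod_insert (by simp)]
              have h0 : Pfac a (k+1) = 1 := by
                unfold Pfac
                rw [hc1.1]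
                simp
              rw [h0, one_mul]
            rw [hprod, hfull]
            ring
          · rw [if_neg (fun h => hC (hiff.1 h)), if_neg hC, mul_zero]
        · rw [if_neg hc1]
          by_cases hC : (∑ j ∈ Finset.Icc 1 (k+1), j * a j) = k+1
          · rw [if_pos hC]
            have ha1 : a 1 = 0 := by
              by_cases hk1 : a (k+1) = 0
              · by_contra hne
                exact hc1 ⟨hk1, by omega⟩
              · have h2 : 1 * a 1 ≤ ∑ j ∈ Finset.Icc 1 k, j * a j :=
                  Finset.single_le_sum (f := fun j => j * a j)
                    (fun j _ => Nat.zero_le _) mem1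
                have h3 : k+1 ≤ (k+1) * a (k+1) :=
                  Nat.le_mul_of_pos_right _ (by omega)
                generalize hP : (k+1) * a (k+1) = P at hsplit h3
                omega
            rw [ha1]
            simp
          · rw [if_neg hC, mul_zero]
      -- ### term B
      have TB : ∀ s ∈ Finset.Icc 1 k,
          (s:ℝ) * ((a s : ℝ) + 1) *
            (if (a (k + 1) = if s = k then 1 else 0) ∧ 1 ≤ a (s + 1) then
              ((Ncount k fun j => if j = s then a s + 1 else if j = s + 1 then a (s + 1) - 1 else a j : ℕ) : ℝ)
            else 0)
          = ((s:ℝ) + 1) * (a (s+1) : ℝ) *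
              (if (∑ j ∈ Finset.Icc 1 (k+1), j * a j) = k + 1 then
                (k ! : ℝ) * ∏ j ∈ Finset.Icc 1 (k+1), Pfac a j else 0) := by
        intro s hs
        obtain ⟨hs1, hsk⟩ := Finset.mem_Icc.1 hs
        rw [IH (fun j => if j = s then a s + 1 else if j = s + 1 then a (s + 1) - 1 else a j)]
        set b : ℕ → ℕ :=
          fun j => if j = s then a s + 1 else if j = s + 1 then a (s + 1) - 1 else a j with hb
        have hbs : b s = a s + 1 := by simp [hb]
        have hbs1 : b (s+1) = a (s+1) - 1 := by
          have : ¬ (s + 1 = s) := by omega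
          simp [hb, this]
        have hbj : ∀ j, j ≠ s → j ≠ s+1 → b j = a j := by
          intro j h1 h2
          simp [hb, h1, h2]
        by_cases hc2 : (a (k + 1) = if s = k then 1 else 0) ∧ 1 ≤ a (s + 1)
        · by_cases hsk' : s = k
          · -- s = k
            subst hsk'
            have hak1 : a (s+1) = 1 := by
              have := hc2.1
              rwa [if_pos rfl] at this
            have hsum2 : (∑ j ∈ Finset.Icc 1 s, j * b j) + s * a s
                = (∑ j ∈ Finset.Icc 1 s, j * a j) + s * b s :=
              sum_update_one (Finset.Icc 1 s) (fun j => j * b j) (fun j => j * a j) s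
                (Finset.mem_Icc.2 ⟨hs1, le_rfl⟩)
                (fun j hj hne => by
                  simp only [hbj j hne (by have := Finset.mem_Icc.1 hj; omega)])
            rw [hbs] at hsum2
            have hiff2 : ((∑ j ∈ Finset.Icc 1 s, j * b j) = s)
                ↔ ((∑ j ∈ Finset.Icc 1 (s+1), j * a j) = s+1) := by
              rw [hsplit, hak1, Nat.mul_one]
              have e1 : s * (a s + 1) = s * a s + s := by ring
              rw [e1] at hsum2
              generalize hX : s * a s = X at hsum2
              omega
            by_cases hC : (∑ j ∈ Finset.Icc 1 (s+1), j * a j) = s+1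
            · rw [if_pos hc2, if_pos (hiff2.2 hC), if_pos hC]
              have hup : (∏ j ∈ Finset.Icc 1 s, Pfac b j) * Pfac a s
                  = (∏ j ∈ Finset.Icc 1 s, Pfac a j) * Pfac b s :=
                prod_update_one (Finset.Icc 1 s) (Pfac b) (Pfac a) s
                  (Finset.mem_Icc.2 ⟨hs1, le_rfl⟩)
                  (fun j hj hne => by
                    unfold Pfac
                    rw [hbj j hne (by have := Finset.mem_Icc.1 hj; omega)])
              have hfi : Pfac b s * ((s:ℝ) * ((a s:ℝ)+1)) = Pfac a s := by
                unfold Pfac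
                rw [hbs]
                exact_mod_cast fac_inc (x := s) (n := a s) hs1
              have hPkne := Pfac_ne_zero a (j := s) hs1
              have hprodb : (∏ j ∈ Finset.Icc 1 s, Pfac b j) * ((s:ℝ) * ((a s:ℝ)+1))
                  = ∏ j ∈ Finset.Icc 1 s, Pfac a j := by
                apply mul_right_cancel₀ hPkne
                calc (∏ j ∈ Finset.Icc 1 s, Pfac b j) * ((s:ℝ) * ((a s:ℝ)+1)) * Pfac a s
                    = ((∏ j ∈ Finset.Icc 1 s, Pfac b j) * Pfac a s) * ((s:ℝ) * ((a s:ℝ)+1)) := by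
                      ring
                  _ = ((∏ j ∈ Finset.Icc 1 s, Pfac a j) * Pfac b s) * ((s:ℝ) * ((a s:ℝ)+1)) := by
                      rw [hup]
                  _ = (∏ j ∈ Finset.Icc 1 s, Pfac a j) * (Pfac b s * ((s:ℝ) * ((a s:ℝ)+1))) := by
                      ring
                  _ = (∏ j ∈ Finset.Icc 1 s, Pfac a j) * Pfac a s := by rw [hfi]
              have hfull2 : (∏ j ∈ Finset.Icc 1 (s+1), Pfac a j)
                  = (∏ j ∈ Finset.Icc 1 s, Pfac a j) * (1/((s:ℝ)+1)) := by
                rw [Icc_succ_insert, Finset.prod_insert (by simp)]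
                have h0 : Pfac a (s+1) = 1/((s:ℝ)+1) := by
                  unfold Pfac
                  rw [hak1]
                  push_cast
                  simp
                rw [h0]
                ring
              rw [hfull2]
              have hne1 : ((s:ℝ)+1) ≠ 0 := by positivity
              rw [hak1]
              push_cast
              field_simp
              linear_combination hprodb
            · rw [if_pos hc2, if_neg (fun h => hC (hiff2.1 h)), if_neg hC, mul_zero, mul_zero]
          · -- s < k
            have hsklt : s < k := lt_of_le_of_ne hsk hsk'
            have hak0 : a (k+1) = 0 := by
              have := hc2.1
              rwa [if_neg hsk'] at this
            have mems1 : s+1 ∈ Finset.Icc 1 k := Finset.mem_Icc.2 ⟨by omega, by omega⟩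
            have hsum2 : (∑ j ∈ Finset.Icc 1 k, j * b j) + s * a s + (s+1) * a (s+1)
                = (∑ j ∈ Finset.Icc 1 k, j * a j) + s * b s + (s+1) * b (s+1) :=
              sum_update_two (Finset.Icc 1 k) (fun j => j * b j) (fun j => j * a j)
                s (s+1) hs mems1 (by omega)
                (fun j _ h1 h2 => by simp only [hbj j h1 h2])
            rw [hbs, hbs1] at hsum2
            have hiff2 : ((∑ j ∈ Finset.Icc 1 k, j * b j) = k)
                ↔ ((∑ j ∈ Finset.Icc 1 (k+1), j * a j) = k+1) := by
              rw [hsplit, hak0, Nat.mul_zero, Nat.add_zero]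
              have e1 : s * (a s + 1) = s * a s + s := by ring
              have e2 : (s+1) * (a (s+1) - 1) + (s+1) = (s+1) * a (s+1) := by
                have h3 : a (s+1) - 1 + 1 = a (s+1) := by omega
                calc (s+1) * (a (s+1) - 1) + (s+1)
                    = (s+1) * ((a (s+1) - 1) + 1) := by ring
                  _ = (s+1) * a (s+1) := by rw [h3]
              rw [e1] at hsum2
              generalize hX : s * a s = X at hsum2
              generalize hY : (s+1) * a (s+1) = Y at hsum2 e2
              generalize hZ : (s+1) * (a (s+1) - 1) = Z at hsum2 e2
              omega
            by_cases hC : (∑ j ∈ Finset.Icc 1 (k+1), j * a j) = k+1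
            · rw [if_pos hc2, if_pos (hiff2.2 hC), if_pos hC]
              have hup : (∏ j ∈ Finset.Icc 1 k, Pfac b j) * Pfac a s * Pfac a (s+1)
                  = (∏ j ∈ Finset.Icc 1 k, Pfac a j) * Pfac b s * Pfac b (s+1) :=
                prod_update_two (Finset.Icc 1 k) (Pfac b) (Pfac a) s (s+1) hs mems1
                  (by omega)
                  (fun j _ h1 h2 => by unfold Pfac; rw [hbj j h1 h2])
              have hfi : Pfac b s * ((s:ℝ) * ((a s:ℝ)+1)) = Pfac a s := by
                unfold Pfac
                rw [hbs]
                exact_mod_cast fac_inc (x := s) (n := a s) hs1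
              have hfd2 : Pfac b (s+1) = ((s:ℝ)+1) * (a (s+1):ℝ) * Pfac a (s+1) := by
                unfold Pfac
                rw [hbs1, fac_dec (x := s+1) (n := a (s+1)) (by omega) hc2.2]
                push_cast
                ring
              have hane : Pfac a s ≠ 0 := Pfac_ne_zero a hs1
              have hane1 : Pfac a (s+1) ≠ 0 := Pfac_ne_zero a (by omega)
              have hprodb : (∏ j ∈ Finset.Icc 1 k, Pfac b j) * ((s:ℝ) * ((a s:ℝ)+1))
                  = (∏ j ∈ Finset.Icc 1 k, Pfac a j) * (((s:ℝ)+1) * (a (s+1):ℝ)) := by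
                apply mul_right_cancel₀ hane
                apply mul_right_cancel₀ hane1
                calc (∏ j ∈ Finset.Icc 1 k, Pfac b j) * ((s:ℝ) * ((a s:ℝ)+1)) * Pfac a s * Pfac a (s+1)
                    = ((∏ j ∈ Finset.Icc 1 k, Pfac b j) * Pfac a s * Pfac a (s+1)) * ((s:ℝ) * ((a s:ℝ)+1)) := by
                      ring
                  _ = ((∏ j ∈ Finset.Icc 1 k, Pfac a j) * Pfac b s * Pfac b (s+1)) * ((s:ℝ) * ((a s:ℝ)+1)) := by
                      rw [hup]
                  _ = ((∏ j ∈ Finset.Icc 1 k, Pfac a j) * Pfac b (s+1)) * (Pfac b s * ((s:ℝ) * ((a s:ℝ)+1))) := by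
                      ring
                  _ = ((∏ j ∈ Finset.Icc 1 k, Pfac a j) * Pfac b (s+1)) * Pfac a s := by
                      rw [hfi]
                  _ = ((∏ j ∈ Finset.Icc 1 k, Pfac a j) * (((s:ℝ)+1) * (a (s+1):ℝ) * Pfac a (s+1))) * Pfac a s := by
                      rw [hfd2]
                  _ = (∏ j ∈ Finset.Icc 1 k, Pfac a j) * (((s:ℝ)+1) * (a (s+1):ℝ)) * Pfac a s * Pfac a (s+1) := by
                      ring
              have hfull : (∏ j ∈ Finset.Icc 1 (k+1), Pfac a j)
                  = ∏ j ∈ Finset.Icc 1 k, Pfac a j := by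
                rw [Icc_succ_insert, Finset.prod_insert (by simp)]
                have h0 : Pfac a (k+1) = 1 := by
                  unfold Pfac
                  rw [hak0]
                  simp
                rw [h0, one_mul]
              rw [hfull]
              calc (s:ℝ) * ((a s:ℝ)+1) * ((k ! :ℝ) * ∏ j ∈ Finset.Icc 1 k, Pfac b j)
                  = (k ! :ℝ) * ((∏ j ∈ Finset.Icc 1 k, Pfac b j) * ((s:ℝ) * ((a s:ℝ)+1))) := by
                    ring
                _ = (k ! :ℝ) * ((∏ j ∈ Finset.Icc 1 k, Pfac a j) * (((s:ℝ)+1) * (a (s+1):ℝ))) := by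
                    rw [hprodb]
                _ = ((s:ℝ)+1) * (a (s+1):ℝ) * ((k ! :ℝ) * ∏ j ∈ Finset.Icc 1 k, Pfac a j) := by
                    ring
            · rw [if_pos hc2, if_neg (fun h => hC (hiff2.1 h)), if_neg hC, mul_zero, mul_zero]
        · rw [if_neg hc2, mul_zero]
          by_cases hC : (∑ j ∈ Finset.Icc 1 (k+1), j * a j) = k+1
          · rw [if_pos hC]
            have ha0 : a (s+1) = 0 := by
              by_contra h0
              apply hc2
              refine ⟨?_, by omega⟩
              by_cases hsk' : s = k
              · subst hsk'
                rw [if_pos rfl]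
                have h3 : s+1 ≤ (s+1) * a (s+1) := Nat.le_mul_of_pos_right _ (by omega)
                have h5 : (∑ j ∈ Finset.Icc 1 s, j * a j) + (s+1) * a (s+1) = s+1 := by
                  rw [← hsplit]; exact hC
                have h4 : (s+1) * a (s+1) = (s+1) * 1 := by
                  generalize hP : (s+1) * a (s+1) = P at h5 h3 ⊢
                  omega
                have h6 := Nat.eq_of_mul_eq_mul_left (by omega : 0 < s+1) h4
                omega
              · rw [if_neg hsk']
                by_contra hne
                have h3 : k+1 ≤ (k+1) * a (k+1) := Nat.le_mul_of_pos_right _ (by omega)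
                have mems1 : s+1 ∈ Finset.Icc 1 k :=
                  Finset.mem_Icc.2 ⟨by omega, by omega⟩
                have h2 : (s+1) * a (s+1) ≤ ∑ j ∈ Finset.Icc 1 k, j * a j :=
                  Finset.single_le_sum (f := fun j => j * a j)
                    (fun j _ => Nat.zero_le _) mems1
                have h6 : 1 ≤ (s+1) * a (s+1) := Nat.mul_pos (by omega) (by omega)
                generalize hP : (k+1) * a (k+1) = P at hsplit h3
                generalize hQ : (s+1) * a (s+1) = Q at h2 h6
                omega
            rw [ha0]
            simp
          · rw [if_neg hC, mul_zero]
      -- ### assemble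
      rw [TA, Finset.sum_congr rfl TB, ← Finset.sum_mul]
      by_cases hC : (∑ j ∈ Finset.Icc 1 (k+1), j * a j) = k+1
      · rw [if_pos hC, if_pos hC]
        have hval : 1 * a 1 + (∑ s ∈ Finset.Icc 1 k, (s+1) * a (s+1)) = k + 1 := by
          rw [← sum_shift]
          exact hC
        have hsumR : (a 1 : ℝ) + (∑ s ∈ Finset.Icc 1 k, ((s:ℝ)+1) * (a (s+1):ℝ)) = (k:ℝ)+1 := by
          have h7 : ((1 * a 1 + ∑ s ∈ Finset.Icc 1 k, (s+1) * a (s+1) : ℕ) : ℝ) = ((k:ℝ)+1) := by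
            rw [hval]
            push_cast
            ring
          push_cast at h7
          linarith [h7]
        rw [Nat.factorial_succ]
        push_cast
        linear_combination ((k ! : ℝ) * ∏ j ∈ Finset.Icc 1 (k+1), Pfac a j) * hsumR
      · rw [if_neg hC, if_neg hC]
        ring

end RRTaux

open Classical in
/-- **Ewens sampling formula for random recursive trees**: the joint law of the subtree
size counts `(C_k(1), …, C_k(k))` after removing the root of a uniform random recursive
tree on `k+1` vertices is
`P[C_k(j) = a_j, 1 ≤ j ≤ k] = 1_{Σ j a_j = k} ∏_{j=1}^k 1/(j^{a_j} a_j!)`. -/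
theorem rrt_root_removal_ewens (k : ℕ) (hk : 1 ≤ k) (a : ℕ → ℕ) :
    ((Finset.univ.filter fun σ : RRTCode k =>
        ∀ j ∈ Finset.Icc 1 k, rrtC k σ j = a j).card : ℝ) / (Fintype.card (RRTCode k)) =
      if ∑ j ∈ Finset.Icc 1 k, j * a j = k then
        ∏ j ∈ Finset.Icc 1 k, 1 / ((j : ℝ) ^ (a j) * (Nat.factorial (a j)))
      else 0 := by
  have h1 : (Finset.univ.filter fun σ : RRTCode k =>
      ∀ j ∈ Finset.Icc 1 k, rrtC k σ j = a j).card = RRTaux.Ncount k a := by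
    rw [Finset.card_filter, RRTaux.Ncount]
    refine Finset.sum_congr rfl fun σ _ => ?_
    by_cases h : ∀ j ∈ Finset.Icc 1 k, rrtC k σ j = a j
    · rw [if_pos h, RRTaux.ind_pos h]
    · rw [if_neg h, RRTaux.ind_neg h]
  rw [h1, RRTaux.card_RRT, RRTaux.main_formula k a]
  by_cases hc : (∑ j ∈ Finset.Icc 1 k, j * a j) = k
  · rw [if_pos hc, if_pos hc]
    have hne : ((Nat.factorial k : ℕ) : ℝ) ≠ 0 := Nat.cast_ne_zero.2 (Nat.factorial_ne_zero k)
    rw [mul_div_cancel_left₀ _ hne]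
    rfl
  · rw [if_neg hc, if_neg hc, zero_div]
end

section
/- For two nonnegative sequences x, y ∈ ℓ^p (1 ≤ p ≤ ∞), the decreasing rearrangements satisfy ‖x^↓ − y^↓‖_{ℓ^p} ≤ ‖x − y‖_{ℓ^p}; i.e. decreasing rearrangement is nonexpansive in ℓ^p. -/
open MeasureTheory ENNReal

/-- The decreasing rearrangement of a nonnegative sequence `x : ℕ → ℝ`:
`x^↓(n) = inf {t ≥ 0 : #{i : x i > t} ≤ n}`. -/
noncomputable def decRearrange (x : ℕ → ℝ) (n : ℕ) : ℝ :=
  sInf {t : ℝ | 0 ≤ t ∧ {i : ℕ | t < x i}.Finite ∧ {i : ℕ | t < x i}.ncard ≤ n}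

namespace DecR

/-- level set -/
def S (x : ℕ → ℝ) (t : ℝ) : Set ℕ := {i | t < x i}
/-- admissible set -/
def A (x : ℕ → ℝ) (n : ℕ) : Set ℝ := {t | 0 ≤ t ∧ (S x t).Finite ∧ (S x t).ncard ≤ n}

lemma dec_eq (x : ℕ → ℝ) (n : ℕ) : decRearrange x n = sInf (A x n) := rfl

lemma S_mono (x : ℕ → ℝ) {s t : ℝ} (h : s ≤ t) : S x t ⊆ S x s :=
  fun i hi => lt_of_le_of_lt h hi

lemma A_bddBelow (x : ℕ → ℝ) (n : ℕ) : BddBelow (A x n) := ⟨0, fun _ ht => ht.1⟩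

lemma mem_A_of_le {x : ℕ → ℝ} {n : ℕ} {s t : ℝ} (hs : s ∈ A x n) (h : s ≤ t) : t ∈ A x n := by
  refine ⟨hs.1.trans h, hs.2.1.subset (S_mono x h), le_trans ?_ hs.2.2⟩
  exact Set.ncard_le_ncard (S_mono x h) hs.2.1

lemma A_nonempty_of_bound {x : ℕ → ℝ} {B : ℝ} (hB : ∀ i, x i ≤ B) (n : ℕ) :
    (A x n).Nonempty := by
  refine ⟨max B 0, le_max_right _ _, ?_, ?_⟩
  · have : S x (max B 0) = ∅ := by
      ext i; simp only [S, Set.mem_setOf_eq, Set.mem_empty_iff_false, iff_false, not_lt]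
      exact (hB i).trans (le_max_left _ _)
    rw [this]; exact Set.finite_empty
  · have : S x (max B 0) = ∅ := by
      ext i; simp only [S, Set.mem_setOf_eq, Set.mem_empty_iff_false, iff_false, not_lt]
      exact (hB i).trans (le_max_left _ _)
    rw [this]; simp

lemma d_nonneg {x : ℕ → ℝ} (hne : ∀ m, (A x m).Nonempty) (n : ℕ) :
    0 ≤ decRearrange x n :=
  le_csInf (hne n) fun _ ht => ht.1

lemma not_mem_A_of_lt_d {x : ℕ → ℝ} {n : ℕ} {t : ℝ} (h : t < decRearrange x n) :
    t ∉ A x n := fun h' => (csInf_le (A_bddBelow x n) h').not_gt h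

/-- the infimum is attained: `d n ∈ A x n`. -/
lemma d_mem_A {x : ℕ → ℝ} (hne : ∀ m, (A x m).Nonempty) (n : ℕ) :
    decRearrange x n ∈ A x n := by
  set u := decRearrange x n with hu
  refine ⟨d_nonneg hne n, ?_⟩
  by_contra hcon
  -- extract a finite subset of `S x u` of cardinality `n+1`
  obtain ⟨G, hGsub, hGfin, hGcard⟩ :
      ∃ G, G ⊆ S x u ∧ G.Finite ∧ G.ncard = n + 1 := by
    by_cases hfin : (S x u).Finite
    · have hcard : n + 1 ≤ (S x u).ncard := by
        by_contra hc
        exact hcon ⟨hfin, by omega⟩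
      obtain ⟨G, hG1, hG2⟩ := Set.exists_subset_card_eq hcard
      exact ⟨G, hG1, (hfin.subset hG1), hG2⟩
    · have hinf : (S x u).Infinite := hfin
      obtain ⟨G, hG1, hG2⟩ := hinf.exists_subset_card_eq (n+1)
      exact ⟨↑G, hG1, G.finite_toSet, by simp [hG2]⟩
  have hGne : G.Nonempty := by
    rw [← Set.ncard_pos hGfin, hGcard]; omega
  -- minimum of x over G
  classical
  set Gf := hGfin.toFinset with hGf
  have hGfne : Gf.Nonempty := by simpa [hGf] using hGne
  set m := Gf.inf' hGfne x with hm
  have hmG : ∀ i ∈ G, m ≤ x i := fun i hi => Finset.inf'_le x (by simpa [hGf] using hi)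
  have hum : u < m := by
    obtain ⟨i₀, hi₀, hi₀'⟩ := Finset.exists_mem_eq_inf' hGfne x
    have h1 : u < x i₀ := hGsub (by simpa [hGf] using hi₀)
    calc u < x i₀ := h1
    _ = Gf.inf' hGfne x := hi₀'.symm
  -- find t ∈ A x n with t < m
  obtain ⟨t, htA, htm⟩ : ∃ t ∈ A x n, t < m := by
    by_contra hc
    push_neg at hc
    have : m ≤ u := le_csInf (hne n) hc
    exact absurd hum (not_lt.mpr this)
  have hGS : G ⊆ S x t := fun i hi => lt_of_lt_of_le htm (hmG i hi)
  have h3 := Set.ncard_le_ncard hGS htA.2.1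
  have h4 := htA.2.2
  rw [hGcard] at h3
  omega

lemma d_antitone {x : ℕ → ℝ} (hne : ∀ m, (A x m).Nonempty) :
    Antitone (decRearrange x) := by
  intro a b hab
  show sInf (A x b) ≤ sInf (A x a)
  exact csInf_le_csInf (A_bddBelow x b) (hne a)
    (fun t ht => ⟨ht.1, ht.2.1, ht.2.2.trans hab⟩)


lemma S_finite_of_pos {x : ℕ → ℝ} {q : ℝ} (hq : 0 < q) (hx0 : ∀ i, 0 ≤ x i)
    (hs : Summable fun i => x i ^ q) {t : ℝ} (ht : 0 < t) : (S x t).Finite := by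
  have h0 := hs.tendsto_cofinite_zero
  have hev : ∀ᶠ i in Filter.cofinite, x i ^ q < t ^ q :=
    h0.eventually_lt_const (Real.rpow_pos_of_pos ht q)
  refine (Filter.eventually_cofinite.mp hev).subset ?_
  intro i hi
  simp only [S, Set.mem_setOf_eq] at hi
  simp only [Set.mem_setOf_eq, not_lt]
  exact Real.rpow_le_rpow ht.le hi.le hq.le

lemma exists_bound_of_summable {x : ℕ → ℝ} {q : ℝ} (hq : 0 < q) (hx0 : ∀ i, 0 ≤ x i)
    (hs : Summable fun i => x i ^ q) : ∃ B, ∀ i, x i ≤ B := by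
  refine ⟨(∑' i, x i ^ q) ^ q⁻¹, fun i => ?_⟩
  have h1 : x i ^ q ≤ ∑' j, x j ^ q :=
    hs.le_tsum i (fun j _ => Real.rpow_nonneg (hx0 j) q)
  have h2 : (x i ^ q) ^ q⁻¹ ≤ (∑' j, x j ^ q) ^ q⁻¹ :=
    Real.rpow_le_rpow (Real.rpow_nonneg (hx0 i) q) h1 (by positivity)
  rwa [Real.rpow_rpow_inv (hx0 i) hq.ne'] at h2

/-- if `d m > 0` then there are at least `m+1` indices with `x i ≥ d m`. -/
lemma card_ge_of_d_pos {x : ℕ → ℝ} (hne : ∀ m, (A x m).Nonempty)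
    (hfin : ∀ t : ℝ, 0 < t → (S x t).Finite) {m : ℕ}
    (hu : 0 < decRearrange x m) :
    {i | decRearrange x m ≤ x i}.Finite ∧ m + 1 ≤ {i | decRearrange x m ≤ x i}.ncard := by
  set u := decRearrange x m with hudef
  have hu2 : 0 < u / 2 := by linarith
  have hCne : ∃ k, ∃ t, u/2 ≤ t ∧ t < u ∧ (S x t).ncard = k :=
    ⟨(S x (u/2)).ncard, u/2, le_refl _, by linarith, rfl⟩
  classical
  set k₀ := Nat.find hCne with hk₀
  obtain ⟨t₀, ht₀l, ht₀u, ht₀c⟩ := Nat.find_spec hCne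
  have ht₀pos : 0 < t₀ := lt_of_lt_of_le hu2 ht₀l
  have hfin₀ : (S x t₀).Finite := hfin t₀ ht₀pos
  have hEq : {i | u ≤ x i} = S x t₀ := by
    ext i
    simp only [Set.mem_setOf_eq, S]
    constructor
    · intro h; exact lt_of_lt_of_le ht₀u h
    · intro h
      by_contra hc
      push_neg at hc
      set t₁ := max t₀ (x i) with ht₁
      have ht₁l : u/2 ≤ t₁ := ht₀l.trans (le_max_left _ _)
      have ht₁u : t₁ < u := max_lt ht₀u hc
      have hsub : S x t₁ ⊂ S x t₀ := by
        constructor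
        · exact S_mono x (le_max_left _ _)
        · intro hsub'
          have : i ∈ S x t₁ := hsub' h
          simp only [S, Set.mem_setOf_eq] at this
          exact absurd this (not_lt.mpr (le_max_right _ _))
      have hlt : (S x t₁).ncard < Nat.find hCne := by
        rw [← ht₀c]
        exact Set.ncard_lt_ncard hsub hfin₀
      exact absurd ⟨t₁, ht₁l, ht₁u, rfl⟩ (Nat.find_min hCne hlt)
  have ht₀A : t₀ ∉ A x m := not_mem_A_of_lt_d ht₀u
  have : ¬((S x t₀).Finite ∧ (S x t₀).ncard ≤ m) := fun h => ht₀A ⟨ht₀pos.le, h.1, h.2⟩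
  push_neg at this
  have hcard := this hfin₀
  rw [hEq]
  exact ⟨hfin₀, by omega⟩

/-- translation: if `x ≤ y + c` pointwise then `d_x ≤ d_y + c`. -/
lemma d_le_d_add {x y : ℕ → ℝ} {c : ℝ} (hc : 0 ≤ c) (h : ∀ i, x i ≤ y i + c)
    (hyne : ∀ m, (A y m).Nonempty) (n : ℕ) :
    decRearrange x n ≤ decRearrange y n + c := by
  have key : ∀ t ∈ A y n, decRearrange x n - c ≤ t := by
    intro t ht
    have htc : t + c ∈ A x n := by
      have hsub : S x (t + c) ⊆ S y t := by
        intro i hi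
        simp only [S, Set.mem_setOf_eq] at hi ⊢
        have := h i
        linarith
      exact ⟨by linarith [ht.1], ht.2.1.subset hsub,
        le_trans (Set.ncard_le_ncard hsub ht.2.1) ht.2.2⟩
    have := csInf_le (A_bddBelow x n) htc
    rw [← dec_eq] at this
    linarith
  have := le_csInf (hyne n) key
  rw [← dec_eq] at this
  linarith


lemma convexOn_abs_rpow {q : ℝ} (hq : 1 ≤ q) : ConvexOn ℝ Set.univ (fun t : ℝ => |t| ^ q) := by
  have h2 : ConvexOn ℝ Set.univ (fun t : ℝ => |t|) := by
    refine ⟨convex_univ, fun u _ v _ a b ha hb hab => ?_⟩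
    calc |a • u + b • v| ≤ |a • u| + |b • v| := abs_add_le _ _
      _ = a • |u| + b • |v| := by
        simp only [smul_eq_mul, abs_mul, abs_of_nonneg ha, abs_of_nonneg hb]
  have himg : (fun t : ℝ => |t|) '' Set.univ = Set.Ici (0:ℝ) := by
    ext z
    simp only [Set.image_univ, Set.mem_range, Set.mem_Ici]
    constructor
    · rintro ⟨w, rfl⟩; exact abs_nonneg w
    · intro hz; exact ⟨z, abs_of_nonneg hz⟩
  have h1 : ConvexOn ℝ ((fun t : ℝ => |t|) '' Set.univ) (fun t : ℝ => t ^ q) := by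
    rw [himg]; exact convexOn_rpow hq
  have hmono : MonotoneOn (fun t : ℝ => t ^ q) ((fun t : ℝ => |t|) '' Set.univ) := by
    rw [himg]
    intro a ha b hb hab
    exact Real.rpow_le_rpow ha hab (by linarith)
  exact ConvexOn.comp h1 h2 hmono

lemma twoPoint {Φ : ℝ → ℝ} (hΦ : ConvexOn ℝ Set.univ Φ) {a b c d : ℝ}
    (hba : b ≤ a) (hcd : c ≤ d) :
    Φ (a - d) + Φ (b - c) ≤ Φ (a - c) + Φ (b - d) := by
  set s := a - c with hs
  set t := b - d with ht
  have hts : t ≤ s := by rw [hs, ht]; linarith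
  rcases eq_or_lt_of_le hts with heq | hlt
  · have h1 : a - d = t := by rw [ht]; rw [hs, ht] at heq; linarith
    have h2 : b - c = s := by rw [hs]; rw [hs, ht] at heq; linarith
    rw [h1, h2]; linarith
  · set D := s - t with hD
    have hD0 : 0 < D := by rw [hD]; linarith
    set lam := (a - b) / D with hlam
    have hlam0 : 0 ≤ lam := div_nonneg (by linarith) hD0.le
    have hlam1 : lam ≤ 1 := by
      rw [hlam, div_le_one hD0, hD, hs, ht]; linarith
    have hlD : lam * D = a - b := by
      rw [hlam]; field_simp
    have e1 : a - d = lam * s + (1 - lam) * t := by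
      have h : lam * s + (1 - lam) * t = t + lam * (s - t) := by ring
      rw [h, ← hD, hlD, ht]; ring
    have e2 : b - c = (1 - lam) * s + lam * t := by
      have h : (1 - lam) * s + lam * t = s - lam * (s - t) := by ring
      rw [h, ← hD, hlD, hs]; ring
    have c1 : Φ (a - d) ≤ lam * Φ s + (1 - lam) * Φ t := by
      rw [e1]
      have := hΦ.2 (Set.mem_univ s) (Set.mem_univ t) hlam0 (by linarith : (0:ℝ) ≤ 1 - lam) (by ring)
      simpa using this
    have c2 : Φ (b - c) ≤ (1 - lam) * Φ s + lam * Φ t := by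
      rw [e2]
      have := hΦ.2 (Set.mem_univ s) (Set.mem_univ t) (by linarith : (0:ℝ) ≤ 1 - lam) hlam0 (by ring)
      simpa using this
    nlinarith [c1, c2]

section SortD

open List

noncomputable instance : DecidableRel ((· ≥ ·) : ℝ → ℝ → Prop) := fun a b => Real.decidableLE b a

noncomputable def sortD (l : List ℝ) : List ℝ := l.insertionSort (· ≥ ·)

lemma sortD_perm (l : List ℝ) : sortD l ~ l := l.perm_insertionSort (· ≥ ·)

lemma sortD_sorted (l : List ℝ) : (sortD l).Pairwise (· ≥ ·) :=
  l.pairwise_insertionSort (· ≥ ·)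

lemma sortD_length (l : List ℝ) : (sortD l).length = l.length := (sortD_perm l).length_eq

lemma eq_of_perm_of_sorted' {l l' : List ℝ} (h : l ~ l') (h1 : l.Pairwise (· ≥ ·))
    (h2 : l'.Pairwise (· ≥ ·)) : l = l' :=
  List.Perm.eq_of_pairwise (fun _ _ _ _ a b => le_antisymm b a) h1 h2 h

lemma sortD_congr {l l' : List ℝ} (h : l ~ l') : sortD l = sortD l' :=
  eq_of_perm_of_sorted' (((sortD_perm l).trans h).trans (sortD_perm l').symm)
    (sortD_sorted l) (sortD_sorted l')

lemma sortD_cons_max {l : List ℝ} {m : ℝ} (hm : m ∈ l) (h : ∀ z ∈ l, z ≤ m) :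
    sortD l = m :: sortD (l.erase m) := by
  refine eq_of_perm_of_sorted' ?_ (sortD_sorted l) ?_
  · exact (sortD_perm l).trans ((List.perm_cons_erase hm).trans
      (List.Perm.cons m (sortD_perm (l.erase m)).symm))
  · rw [List.pairwise_cons]
    refine ⟨fun b hb => ?_, sortD_sorted _⟩
    exact h b (List.erase_subset ((sortD_perm _).mem_iff.mp hb))

end SortD

section Key

open List

variable {Φ : ℝ → ℝ}

/-- sum of `Φ (a - b)` over a list of pairs. -/
def phiSum (Φ : ℝ → ℝ) (L : List (ℝ × ℝ)) : ℝ := (L.map fun pr => Φ (pr.1 - pr.2)).sum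

lemma exchange (hΦ : ConvexOn ℝ Set.univ Φ) {L : List (ℝ × ℝ)} {a b : ℝ}
    (ha : a ∈ L.map Prod.fst) (hamax : ∀ z ∈ L.map Prod.fst, z ≤ a)
    (hb : b ∈ L.map Prod.snd) (hbmax : ∀ z ∈ L.map Prod.snd, z ≤ b) :
    ∃ L' : List (ℝ × ℝ), L'.length + 1 = L.length ∧
      L'.map Prod.fst ~ (L.map Prod.fst).erase a ∧
      L'.map Prod.snd ~ (L.map Prod.snd).erase b ∧
      Φ (a - b) + phiSum Φ L' ≤ phiSum Φ L := by
  classical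
  obtain ⟨pr, hpr, hpra⟩ := List.mem_map.mp ha
  obtain ⟨qr, hqr, hqrb⟩ := List.mem_map.mp hb
  by_cases hpq : pr = qr
  · -- the max of fst and max of snd sit in the same pair
    subst hpq
    obtain ⟨L₁, hperm⟩ : ∃ L₁, L ~ pr :: L₁ := ⟨_, List.perm_cons_erase hpr⟩
    refine ⟨L₁, ?_, ?_, ?_, ?_⟩
    · have h := hperm.length_eq
      simp only [List.length_cons] at h; omega
    · have h1 : a :: L₁.map Prod.fst ~ L.map Prod.fst := by
        have := (hperm.map Prod.fst).symm
        simpa [hpra] using this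
      exact (List.cons_perm_iff_perm_erase.mp h1).2
    · have h1 : b :: L₁.map Prod.snd ~ L.map Prod.snd := by
        have := (hperm.map Prod.snd).symm
        simpa [hqrb] using this
      exact (List.cons_perm_iff_perm_erase.mp h1).2
    · have : phiSum Φ L = Φ (pr.1 - pr.2) + phiSum Φ L₁ := by
        unfold phiSum
        rw [(hperm.map (fun pr : ℝ × ℝ => Φ (pr.1 - pr.2))).sum_eq]
        simp
      rw [this, hpra, hqrb]
  · -- distinct pairs (a, c) and (d, b)
    set c := pr.2 with hc
    set d := qr.1 with hd
    obtain ⟨L₁, hperm1⟩ : ∃ L₁, L ~ pr :: L₁ := ⟨_, List.perm_cons_erase hpr⟩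
    have hqr1 : qr ∈ L₁ := by
      have : qr ∈ pr :: L₁ := hperm1.subset hqr
      rcases List.mem_cons.mp this with h | h
      · exact absurd h.symm hpq
      · exact h
    obtain ⟨L₀, hperm2⟩ : ∃ L₀, L₁ ~ qr :: L₀ := ⟨_, List.perm_cons_erase hqr1⟩
    have hperm : L ~ pr :: qr :: L₀ := hperm1.trans (List.Perm.cons pr hperm2)
    have hda : d ≤ a := hamax _ (List.mem_map.mpr ⟨qr, hqr, rfl⟩)
    have hcb : c ≤ b := hbmax _ (List.mem_map.mpr ⟨pr, hpr, rfl⟩)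
    refine ⟨(d, c) :: L₀, ?_, ?_, ?_, ?_⟩
    · have h := hperm.length_eq
      simp only [List.length_cons] at h ⊢; omega
    · have h1 : a :: (d :: L₀.map Prod.fst) ~ L.map Prod.fst := by
        have := (hperm.map Prod.fst).symm
        simpa [hpra, hd] using this
      have h2 := (List.cons_perm_iff_perm_erase.mp h1).2
      simpa using h2
    · have h1 : b :: (c :: L₀.map Prod.snd) ~ L.map Prod.snd := by
        have h0 := (hperm.map Prod.snd).symm
        have hsw : b :: c :: L₀.map Prod.snd ~ (pr :: qr :: L₀).map Prod.snd := by
          simp only [List.map_cons, hqrb, hc]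
          rw [← hqrb]
          exact List.Perm.swap _ _ _
        exact hsw.trans h0
      have h2 := (List.cons_perm_iff_perm_erase.mp h1).2
      simpa using h2
    · have hsum : phiSum Φ L = Φ (a - c) + Φ (d - b) + phiSum Φ L₀ := by
        unfold phiSum
        rw [(hperm.map (fun pr : ℝ × ℝ => Φ (pr.1 - pr.2))).sum_eq]
        simp [hpra, hqrb, hc, hd]
        ring
      have htwo := twoPoint hΦ hda hcb
      have hL' : phiSum Φ ((d, c) :: L₀) = Φ (d - c) + phiSum Φ L₀ := by
        unfold phiSum; simp
      rw [hsum, hL']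
      linarith

lemma key (hΦ : ConvexOn ℝ Set.univ Φ) :
    ∀ (n : ℕ) (L : List (ℝ × ℝ)), L.length = n →
    ((sortD (L.map Prod.fst)).zipWith (fun a b => Φ (a - b)) (sortD (L.map Prod.snd))).sum
      ≤ phiSum Φ L := by
  intro n
  induction n with
  | zero =>
    intro L hL
    rw [List.length_eq_zero_iff] at hL
    subst hL
    simp [sortD, phiSum]
  | succ n ih =>
    intro L hL
    have hLne : L ≠ [] := by intro h; subst h; simp at hL
    set l₁ := L.map Prod.fst with hl₁
    set l₂ := L.map Prod.snd with hl₂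
    have hs₁len : (sortD l₁).length = n + 1 := by rw [sortD_length, hl₁, List.length_map, hL]
    have hs₂len : (sortD l₂).length = n + 1 := by rw [sortD_length, hl₂, List.length_map, hL]
    obtain ⟨a, t₁, he₁⟩ : ∃ a t₁, sortD l₁ = a :: t₁ := by
      cases h : sortD l₁ with
      | nil => rw [h] at hs₁len; simp at hs₁len
      | cons a t₁ => exact ⟨a, t₁, rfl⟩
    obtain ⟨b, t₂, he₂⟩ : ∃ b t₂, sortD l₂ = b :: t₂ := by
      cases h : sortD l₂ with
      | nil => rw [h] at hs₂len; simp at hs₂len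
      | cons b t₂ => exact ⟨b, t₂, rfl⟩
    have ha : a ∈ l₁ := (sortD_perm l₁).subset (he₁ ▸ List.mem_cons_self (a := a) (l := t₁))
    have hb : b ∈ l₂ := (sortD_perm l₂).subset (he₂ ▸ List.mem_cons_self (a := b) (l := t₂))
    have hamax : ∀ z ∈ l₁, z ≤ a := by
      intro z hz
      have hz' : z ∈ sortD l₁ := (sortD_perm l₁).mem_iff.mpr hz
      rw [he₁] at hz'
      rcases List.mem_cons.mp hz' with h | h
      · subst h; exact le_refl _
      · have := sortD_sorted l₁
        rw [he₁, List.pairwise_cons] at this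
        exact this.1 z h
    have hbmax : ∀ z ∈ l₂, z ≤ b := by
      intro z hz
      have hz' : z ∈ sortD l₂ := (sortD_perm l₂).mem_iff.mpr hz
      rw [he₂] at hz'
      rcases List.mem_cons.mp hz' with h | h
      · subst h; exact le_refl _
      · have := sortD_sorted l₂
        rw [he₂, List.pairwise_cons] at this
        exact this.1 z h
    obtain ⟨L', hlen', hfst', hsnd', hsum'⟩ := exchange hΦ ha hamax hb hbmax
    -- t₁ = sortD (L'.map fst)
    have ht₁ : t₁ = sortD (L'.map Prod.fst) := by
      refine eq_of_perm_of_sorted' ?_ ?_ (sortD_sorted _)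
      · have h1 : a :: t₁ ~ l₁ := he₁ ▸ sortD_perm l₁
        have h2 : t₁ ~ l₁.erase a := (List.cons_perm_iff_perm_erase.mp h1).2
        exact (h2.trans hfst'.symm).trans (sortD_perm _).symm
      · have := sortD_sorted l₁
        rw [he₁, List.pairwise_cons] at this
        exact this.2
    have ht₂ : t₂ = sortD (L'.map Prod.snd) := by
      refine eq_of_perm_of_sorted' ?_ ?_ (sortD_sorted _)
      · have h1 : b :: t₂ ~ l₂ := he₂ ▸ sortD_perm l₂
        have h2 : t₂ ~ l₂.erase b := (List.cons_perm_iff_perm_erase.mp h1).2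
        exact (h2.trans hsnd'.symm).trans (sortD_perm _).symm
      · have := sortD_sorted l₂
        rw [he₂, List.pairwise_cons] at this
        exact this.2
    have ihL' := ih L' (by omega)
    rw [he₁, he₂]
    simp only [List.zipWith_cons_cons, List.sum_cons]
    rw [ht₁, ht₂]
    linarith

end Key

section Count

open List

lemma sorted_getElem_le_getElem {l : List ℝ} (hl : l.Pairwise (· ≥ ·)) {k n : ℕ}
    (hkn : k ≤ n) (hn : n < l.length) : l[n] ≤ l[k]'(by omega) := by
  rcases eq_or_lt_of_le hkn with h | h
  · subst h; exact le_refl _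
  · exact (List.pairwise_iff_getElem.mp hl) k n (by omega) hn h

lemma sorted_count_of_getElem_gt {l : List ℝ} (hl : l.Pairwise (· ≥ ·)) {n : ℕ}
    (hn : n < l.length) {t : ℝ} (h : t < l[n]) :
    n + 1 ≤ l.countP (fun z => decide (t < z)) := by
  classical
  have hsplit : l.countP (fun z => decide (t < z)) =
      (l.take (n+1)).countP (fun z => decide (t < z)) +
      (l.drop (n+1)).countP (fun z => decide (t < z)) := by
    rw [← List.countP_append, List.take_append_drop]
  have htake : (l.take (n+1)).countP (fun z => decide (t < z)) = (l.take (n+1)).length := by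
    rw [List.countP_eq_length]
    intro z hz
    obtain ⟨k, hk, hkz⟩ := List.getElem_of_mem (l := l.take (n+1)) hz
    rw [List.length_take] at hk
    rw [List.getElem_take] at hkz
    have : l[n] ≤ l[k]'(by omega) := sorted_getElem_le_getElem hl (by omega) hn
    subst hkz
    simp only [decide_eq_true_eq]
    exact lt_of_lt_of_le h this
  rw [hsplit, htake, List.length_take]
  omega

lemma sorted_getElem_le_of_count {l : List ℝ} (hl : l.Pairwise (· ≥ ·)) {n : ℕ}
    (hn : n < l.length) {t : ℝ} (h : l.countP (fun z => decide (t < z)) ≤ n) :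
    l[n] ≤ t := by
  by_contra hc
  push_neg at hc
  have := sorted_count_of_getElem_gt hl hn hc
  omega

lemma sorted_getElem_ge_of_count {l : List ℝ} (hl : l.Pairwise (· ≥ ·)) {n : ℕ}
    (hn : n < l.length) {c : ℝ} (h : n + 1 ≤ l.countP (fun z => decide (c ≤ z))) :
    c ≤ l[n] := by
  by_contra hc
  push_neg at hc
  have hsplit : l.countP (fun z => decide (c ≤ z)) =
      (l.take n).countP (fun z => decide (c ≤ z)) +
      (l.drop n).countP (fun z => decide (c ≤ z)) := by
    rw [← List.countP_append, List.take_append_drop]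
  have hdrop : (l.drop n).countP (fun z => decide (c ≤ z)) = 0 := by
    rw [List.countP_eq_zero]
    intro z hz
    obtain ⟨k, hk, hkz⟩ := List.getElem_of_mem (l := l.drop n) hz
    rw [List.length_drop] at hk
    rw [List.getElem_drop] at hkz
    have : l[n + k]'(by omega) ≤ l[n] := sorted_getElem_le_getElem hl (by omega) (by omega)
    subst hkz
    simp only [decide_eq_true_eq, not_le]
    exact lt_of_le_of_lt this hc
  have htake := List.countP_le_length (l := l.take n) (p := fun z => decide (c ≤ z))
  rw [List.length_take] at htake
  omega

lemma countP_le_ncard {F : List ℕ} (hF : F.Nodup) {pred : ℕ → Prop} [DecidablePred pred]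
    {T : Set ℕ} (hT : ∀ i, pred i → i ∈ T) (hTfin : T.Finite) :
    F.countP (fun i => decide (pred i)) ≤ T.ncard := by
  classical
  rw [List.countP_eq_length_filter]
  set G := F.filter (fun i => decide (pred i)) with hG
  have hGnd : G.Nodup := hF.filter _
  have hGsub : ↑G.toFinset ⊆ T := by
    intro i hi
    simp only [List.coe_toFinset, Set.mem_setOf_eq, hG, List.mem_filter,
      decide_eq_true_eq] at hi
    exact hT i hi.2
  calc G.length = G.toFinset.card := (List.toFinset_card_of_nodup hGnd).symm
    _ = (↑G.toFinset : Set ℕ).ncard := (Set.ncard_coe_finset _).symm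
    _ ≤ T.ncard := Set.ncard_le_ncard hGsub hTfin

lemma ncard_le_countP {F : List ℕ} (hF : F.Nodup) {pred : ℕ → Prop} [DecidablePred pred]
    {T : Set ℕ} (hT : ∀ i ∈ T, i ∈ F ∧ pred i) (hTfin : T.Finite) :
    T.ncard ≤ F.countP (fun i => decide (pred i)) := by
  classical
  rw [List.countP_eq_length_filter]
  set G := F.filter (fun i => decide (pred i)) with hG
  have hGnd : G.Nodup := hF.filter _
  have hsub : T ⊆ ↑G.toFinset := by
    intro i hi
    simp only [List.coe_toFinset, Set.mem_setOf_eq, hG, List.mem_filter,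
      decide_eq_true_eq]
    exact ⟨(hT i hi).1, (hT i hi).2⟩
  calc T.ncard ≤ (↑G.toFinset : Set ℕ).ncard :=
        Set.ncard_le_ncard hsub (G.toFinset.finite_toSet)
    _ = G.toFinset.card := Set.ncard_coe_finset _
    _ = G.length := List.toFinset_card_of_nodup hGnd

lemma sorted_getElem_gt_of_count {l : List ℝ} (hl : l.Pairwise (· ≥ ·)) {n : ℕ}
    (hn : n < l.length) {t : ℝ} (h : n + 1 ≤ l.countP (fun z => decide (t < z))) :
    t < l[n] := by
  by_contra hc
  push_neg at hc
  have hsplit : l.countP (fun z => decide (t < z)) =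
      (l.take n).countP (fun z => decide (t < z)) +
      (l.drop n).countP (fun z => decide (t < z)) := by
    rw [← List.countP_append, List.take_append_drop]
  have hdrop : (l.drop n).countP (fun z => decide (t < z)) = 0 := by
    rw [List.countP_eq_zero]
    intro z hz
    obtain ⟨k, hk, hkz⟩ := List.getElem_of_mem (l := l.drop n) hz
    rw [List.length_drop] at hk
    rw [List.getElem_drop] at hkz
    have : l[n + k]'(by omega) ≤ l[n] := sorted_getElem_le_getElem hl (by omega) (by omega)
    subst hkz
    simp only [decide_eq_true_eq, not_lt]
    exact this.trans hc
  have htake := List.countP_le_length (l := l.take n) (p := fun z => decide (t < z))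
  rw [List.length_take] at htake
  omega

end Count

section Char

open List Classical in
/-- On a sufficiently big finite index list `F`, the sorted values of `x` agree with
the decreasing rearrangement. -/
lemma sorted_eq_d {x : ℕ → ℝ} (hx0 : ∀ i, 0 ≤ x i)
    (hne : ∀ m, (A x m).Nonempty)
    (hfin : ∀ t : ℝ, 0 < t → (S x t).Finite)
    {N : ℕ} (hN : 0 < N) {F : List ℕ} (hFnd : F.Nodup) (hlen : N ≤ F.length)
    (hF : ∀ i, decRearrange x (N-1) < x i ∨
      (0 < decRearrange x (N-1) ∧ decRearrange x (N-1) ≤ x i) → i ∈ F)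
    {n : ℕ} (hn : n < N) :
    (sortD (F.map x)).getD n 0 = decRearrange x n := by
  classical
  set u := decRearrange x (N-1) with hu
  have hu0 : 0 ≤ u := d_nonneg hne (N-1)
  set l := sortD (F.map x) with hl
  have hllen : l.length = F.length := by rw [hl, sortD_length, List.length_map]
  have hnl : n < l.length := by omega
  have hsorted : l.Pairwise (· ≥ ·) := sortD_sorted _
  have hgetD : l.getD n 0 = l[n] := List.getD_eq_getElem l 0 hnl
  have hcount : ∀ t : ℝ, l.countP (fun z => decide (t < z)) =
      F.countP (fun i => decide (t < x i)) := by
    intro t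
    rw [hl, (sortD_perm (F.map x)).countP_eq, List.countP_map]
    rfl
  have hcountge : ∀ t : ℝ, l.countP (fun z => decide (t ≤ z)) =
      F.countP (fun i => decide (t ≤ x i)) := by
    intro t
    rw [hl, (sortD_perm (F.map x)).countP_eq, List.countP_map]
    rfl
  -- upper bound : l[n] ≤ d n
  have hupper : l[n] ≤ decRearrange x n := by
    have hdA := d_mem_A hne n
    refine sorted_getElem_le_of_count hsorted hnl ?_
    rw [hcount]
    exact le_trans (countP_le_ncard hFnd (fun i hi => hi) hdA.2.1) hdA.2.2
  -- lower bound part 1 : u ≤ l[n]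
  have hlow1 : u ≤ l[n] := by
    rcases lt_or_eq_of_le hu0 with hupos | huzero
    · obtain ⟨hSfin, hScard⟩ := card_ge_of_d_pos hne hfin hupos
      have hSfin' : {i | u ≤ x i}.Finite := hSfin
      have hScard' : N - 1 + 1 ≤ {i | u ≤ x i}.ncard := hScard
      have h9 : N - 1 + 1 = N := by omega
      refine sorted_getElem_ge_of_count hsorted hnl ?_
      rw [hcountge]
      have h8 : {i | u ≤ x i}.ncard ≤ F.countP (fun i => decide (u ≤ x i)) :=
        ncard_le_countP (pred := fun i => u ≤ x i) (T := {i | u ≤ x i}) hFnd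
          (fun i hi => ⟨hF i (Or.inr ⟨hupos, hi⟩), hi⟩) hSfin'
      omega
    · rw [← huzero]
      have : l[n] ∈ l := List.getElem_mem hnl
      have : l[n] ∈ F.map x := (sortD_perm _).subset this
      obtain ⟨i, _, hi⟩ := List.mem_map.mp this
      rw [← hi]
      exact hx0 i
  -- lower bound part 2 : d n ≤ l[n]
  have hlow2 : decRearrange x n ≤ l[n] := by
    rcases le_or_gt (decRearrange x n) u with h | h
    · exact h.trans hlow1
    · by_contra hc
      push_neg at hc
      set t := max u l[n] with htdef
      have htlt : t < decRearrange x n := max_lt h hc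
      have ht0 : 0 ≤ t := hu0.trans (le_max_left _ _)
      have htA : t ∉ A x n := not_mem_A_of_lt_d htlt
      have hsubF : ∀ i ∈ S x t, i ∈ F := by
        intro i hi
        simp only [S, Set.mem_setOf_eq] at hi
        have hui : u < x i := lt_of_le_of_lt (le_max_left _ _) hi
        exact hF i (Or.inl (lt_of_le_of_lt (le_refl u) hui))
      have hStfin : (S x t).Finite := by
        refine Set.Finite.subset (F.toFinset.finite_toSet) ?_
        intro i hi
        simp only [Finset.coe_sort_coe, List.coe_toFinset, Set.mem_setOf_eq]
        exact hsubF i hi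
      have hcard : n + 1 ≤ (S x t).ncard := by
        have h7 : ¬((S x t).Finite ∧ (S x t).ncard ≤ n) := fun hh => htA ⟨ht0, hh.1, hh.2⟩
        push_neg at h7
        have h6 : n < (S x t).ncard := h7 hStfin
        omega
      have hcnt : n + 1 ≤ F.countP (fun i => decide (t < x i)) := by
        have h8 : (S x t).ncard ≤ F.countP (fun i => decide (t < x i)) :=
          ncard_le_countP (pred := fun i => t < x i) (T := S x t) hFnd
            (fun i hi => ⟨hsubF i hi, hi⟩) hStfin
        omega
      have : t < l[n] := by
        refine sorted_getElem_gt_of_count hsorted hnl ?_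
        rw [hcount]; exact hcnt
      exact absurd this (not_lt.mpr (le_max_right _ _))
  rw [hgetD]
  exact le_antisymm hupper hlow2

end Char

section Main

open List

lemma list_sum_toList (G : Finset ℕ) (f : ℕ → ℝ) : (G.toList.map f).sum = ∑ i ∈ G, f i := by
  rw [Finset.sum, ← Finset.coe_toList G, Multiset.map_coe, Multiset.sum_coe]

lemma main_finsum {q : ℝ} (hq : 1 ≤ q) {x y : ℕ → ℝ}
    (hx0 : ∀ i, 0 ≤ x i) (hy0 : ∀ i, 0 ≤ y i)
    (hsx : Summable fun i => x i ^ q) (hsy : Summable fun i => y i ^ q)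
    (N : ℕ) :
    ∑ n ∈ Finset.range N, |decRearrange x n - decRearrange y n| ^ q
      ≤ ∑' i, |x i - y i| ^ q := by
  classical
  have hq0 : 0 < q := by linarith
  -- summability of the difference
  have hsd : Summable fun i => |x i - y i| ^ q := by
    refine Summable.of_nonneg_of_le (fun i => Real.rpow_nonneg (abs_nonneg _) q)
      (fun i => ?_) (hsx.add hsy)
    have h1 : |x i - y i| ≤ max (x i) (y i) := by
      rw [abs_sub_le_iff]
      constructor
      · linarith [le_max_left (x i) (y i), hy0 i]
      · linarith [le_max_right (x i) (y i), hx0 i]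
    have h2 : |x i - y i| ^ q ≤ max (x i) (y i) ^ q :=
      Real.rpow_le_rpow (abs_nonneg _) h1 hq0.le
    refine h2.trans ?_
    rcases max_choice (x i) (y i) with hm | hm <;> rw [hm]
    · have := Real.rpow_nonneg (hy0 i) q; linarith
    · have := Real.rpow_nonneg (hx0 i) q; linarith
  rcases Nat.eq_zero_or_pos N with hN | hN
  · subst hN
    simp only [Finset.range_zero, Finset.sum_empty]
    exact tsum_nonneg (fun i => Real.rpow_nonneg (abs_nonneg _) q)
  obtain ⟨Bx, hBx⟩ := exists_bound_of_summable hq0 hx0 hsx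
  obtain ⟨By, hBy⟩ := exists_bound_of_summable hq0 hy0 hsy
  have hnex : ∀ m, (A x m).Nonempty := fun m => A_nonempty_of_bound hBx m
  have hney : ∀ m, (A y m).Nonempty := fun m => A_nonempty_of_bound hBy m
  have hfinx : ∀ t : ℝ, 0 < t → (S x t).Finite := fun t ht => S_finite_of_pos hq0 hx0 hsx ht
  have hfiny : ∀ t : ℝ, 0 < t → (S y t).Finite := fun t ht => S_finite_of_pos hq0 hy0 hsy ht
  -- finite index sets
  have hGx : {i | decRearrange x (N-1) < x i ∨
      (0 < decRearrange x (N-1) ∧ decRearrange x (N-1) ≤ x i)}.Finite := by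
    rcases (lt_or_eq_of_le (d_nonneg hnex (N-1))) with hpos | hzero
    · refine ((card_ge_of_d_pos hnex hfinx hpos).1).subset ?_
      rintro i (h | h)
      · exact le_of_lt h
      · exact h.2
    · refine ((d_mem_A hnex (N-1)).2.1).subset ?_
      rintro i (h | h)
      · exact h
      · rw [← hzero] at h; exact absurd h.1 (lt_irrefl 0)
  have hGy : {i | decRearrange y (N-1) < y i ∨
      (0 < decRearrange y (N-1) ∧ decRearrange y (N-1) ≤ y i)}.Finite := by
    rcases (lt_or_eq_of_le (d_nonneg hney (N-1))) with hpos | hzero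
    · refine ((card_ge_of_d_pos hney hfiny hpos).1).subset ?_
      rintro i (h | h)
      · exact le_of_lt h
      · exact h.2
    · refine ((d_mem_A hney (N-1)).2.1).subset ?_
      rintro i (h | h)
      · exact h
      · rw [← hzero] at h; exact absurd h.1 (lt_irrefl 0)
  set G : Finset ℕ := hGx.toFinset ∪ hGy.toFinset ∪ Finset.range N with hGdef
  set F : List ℕ := G.toList with hFdef
  have hFnd : F.Nodup := Finset.nodup_toList G
  have hFlen : F.length = G.card := Finset.length_toList G
  have hNle : N ≤ F.length := by
    rw [hFlen]
    calc N = (Finset.range N).card := (Finset.card_range N).symm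
      _ ≤ G.card := Finset.card_le_card (by
        intro i hi
        rw [hGdef]
        exact Finset.mem_union.mpr (Or.inr hi))
  have hmemF : ∀ i ∈ G, i ∈ F := fun i hi => (Finset.mem_toList).mpr hi
  have hFx : ∀ i, (decRearrange x (N-1) < x i ∨
      (0 < decRearrange x (N-1) ∧ decRearrange x (N-1) ≤ x i)) → i ∈ F := by
    intro i hi
    refine hmemF i ?_
    rw [hGdef]
    exact Finset.mem_union.mpr (Or.inl (Finset.mem_union.mpr (Or.inl (hGx.mem_toFinset.mpr hi))))
  have hFy : ∀ i, (decRearrange y (N-1) < y i ∨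
      (0 < decRearrange y (N-1) ∧ decRearrange y (N-1) ≤ y i)) → i ∈ F := by
    intro i hi
    refine hmemF i ?_
    rw [hGdef]
    exact Finset.mem_union.mpr (Or.inl (Finset.mem_union.mpr (Or.inr (hGy.mem_toFinset.mpr hi))))
  have charx : ∀ n, n < N → (sortD (F.map x)).getD n 0 = decRearrange x n :=
    fun n hn => sorted_eq_d hx0 hnex hfinx hN hFnd hNle hFx hn
  have chary : ∀ n, n < N → (sortD (F.map y)).getD n 0 = decRearrange y n :=
    fun n hn => sorted_eq_d hy0 hney hfiny hN hFnd hNle hFy hn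
  -- apply the key rearrangement inequality
  set Φ : ℝ → ℝ := fun t => |t| ^ q with hΦdef
  have hΦ : ConvexOn ℝ Set.univ Φ := convexOn_abs_rpow hq
  set L : List (ℝ × ℝ) := F.map (fun i => (x i, y i)) with hLdef
  have hLfst : L.map Prod.fst = F.map x := by
    rw [hLdef, List.map_map]; rfl
  have hLsnd : L.map Prod.snd = F.map y := by
    rw [hLdef, List.map_map]; rfl
  have hkey := key hΦ L.length L rfl
  rw [hLfst, hLsnd] at hkey
  -- the right side equals the finset sum
  have hrhs : phiSum Φ L = ∑ i ∈ G, |x i - y i| ^ q := by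
    rw [phiSum, hLdef, List.map_map, ← list_sum_toList G (fun i => |x i - y i| ^ q)]
    rfl
  have hrhs2 : ∑ i ∈ G, |x i - y i| ^ q ≤ ∑' i, |x i - y i| ^ q :=
    Summable.sum_le_tsum G (fun i _ => Real.rpow_nonneg (abs_nonneg _) q) hsd
  -- the left side
  set lx := sortD (F.map x) with hlx
  set ly := sortD (F.map y) with hly
  set M := F.length with hM
  have hlxlen : lx.length = M := by rw [hlx, sortD_length, List.length_map]
  have hlylen : ly.length = M := by rw [hly, sortD_length, List.length_map]
  have hzip : lx.zipWith (fun a b => Φ (a - b)) ly =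
      List.ofFn (fun k : Fin M => Φ (lx.getD k 0 - ly.getD k 0)) := by
    apply List.ext_getElem
    · rw [List.length_zipWith, List.length_ofFn, hlxlen, hlylen, min_self]
    · intro k h1 h2
      rw [List.getElem_zipWith, List.getElem_ofFn]
      have hkM : k < M := by rwa [List.length_ofFn] at h2
      rw [List.getD_eq_getElem lx 0 (by omega), List.getD_eq_getElem ly 0 (by omega)]
  have hzipsum : (lx.zipWith (fun a b => Φ (a - b)) ly).sum =
      ∑ k ∈ Finset.range M, Φ (lx.getD k 0 - ly.getD k 0) := by
    rw [hzip, List.sum_ofFn]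
    exact Fin.sum_univ_eq_sum_range (fun k => Φ (lx.getD k 0 - ly.getD k 0)) M
  have hsub : ∑ k ∈ Finset.range N, Φ (lx.getD k 0 - ly.getD k 0) ≤
      ∑ k ∈ Finset.range M, Φ (lx.getD k 0 - ly.getD k 0) := by
    refine Finset.sum_le_sum_of_subset_of_nonneg ?_ (fun i _ _ => ?_)
    · exact Finset.range_subset_range.mpr hNle
    · exact Real.rpow_nonneg (abs_nonneg _) q
  have hlhs : ∑ n ∈ Finset.range N, |decRearrange x n - decRearrange y n| ^ q =
      ∑ k ∈ Finset.range N, Φ (lx.getD k 0 - ly.getD k 0) := by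
    refine Finset.sum_congr rfl (fun n hn => ?_)
    rw [Finset.mem_range] at hn
    rw [charx n hn, chary n hn]
  calc ∑ n ∈ Finset.range N, |decRearrange x n - decRearrange y n| ^ q
      = ∑ k ∈ Finset.range N, Φ (lx.getD k 0 - ly.getD k 0) := hlhs
    _ ≤ ∑ k ∈ Finset.range M, Φ (lx.getD k 0 - ly.getD k 0) := hsub
    _ = (lx.zipWith (fun a b => Φ (a - b)) ly).sum := hzipsum.symm
    _ ≤ phiSum Φ L := hkey
    _ = ∑ i ∈ G, |x i - y i| ^ q := hrhs
    _ ≤ ∑' i, |x i - y i| ^ q := hrhs2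

end Main

end DecR

open DecR in
/-- **Nonexpansivity of decreasing rearrangement in `ℓ^p`**: for nonnegative sequences
`x, y ∈ ℓ^p` (`1 ≤ p ≤ ∞`), `‖x^↓ − y^↓‖_{ℓ^p} ≤ ‖x − y‖_{ℓ^p}` (norms taken as `L^p`
norms for the counting measure on `ℕ`). -/
theorem decRearrange_nonexpansive (p : ℝ≥0∞) (hp : 1 ≤ p) (x y : ℕ → ℝ)
    (hx0 : ∀ i, 0 ≤ x i) (hy0 : ∀ i, 0 ≤ y i)
    (hx : Memℓp x p) (hy : Memℓp y p) :
    eLpNorm (fun i => decRearrange x i - decRearrange y i) p (Measure.count : Measure ℕ) ≤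
      eLpNorm (fun i => x i - y i) p (Measure.count : Measure ℕ) := by
  by_cases hptop : p = ∞
  · -- the ℓ^∞ case
    subst hptop
    rw [eLpNorm_exponent_top, eLpNorm_exponent_top]
    set M := eLpNormEssSup (fun i => x i - y i) (Measure.count : Measure ℕ) with hM
    by_cases hMtop : M = ∞
    · rw [hMtop]; exact le_top
    -- pointwise bound |x i - y i| ≤ M.toReal
    have hae : ∀ᵐ i ∂(Measure.count : Measure ℕ),
        (‖x i - y i‖₊ : ℝ≥0∞) ≤ M := ae_le_eLpNormEssSup
    have hall : ∀ i, (‖x i - y i‖₊ : ℝ≥0∞) ≤ M := by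
      rw [Filter.eventually_iff, mem_ae_iff] at hae
      have hempty := Measure.count_eq_zero_iff.mp hae
      intro i
      by_contra hc
      have : i ∈ ({i | (‖x i - y i‖₊ : ℝ≥0∞) ≤ M}ᶜ : Set ℕ) := hc
      rw [hempty] at this
      exact this
    set c := M.toReal with hc
    have hc0 : 0 ≤ c := ENNReal.toReal_nonneg
    have hbound : ∀ i, |x i - y i| ≤ c := by
      intro i
      have h1 := hall i
      rw [← enorm_eq_nnnorm, Real.enorm_eq_ofReal_abs] at h1
      rw [hc]
      exact (ENNReal.ofReal_le_iff_le_toReal hMtop).mp h1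
    -- A-nonemptiness
    obtain ⟨Bx, hBx⟩ := memℓp_infty_iff.mp hx
    obtain ⟨By, hBy⟩ := memℓp_infty_iff.mp hy
    have hnex : ∀ m, (A x m).Nonempty := by
      intro m
      refine A_nonempty_of_bound (B := Bx) (fun i => ?_) m
      have := hBx ⟨i, rfl⟩
      calc x i ≤ |x i| := le_abs_self _
        _ = ‖x i‖ := (Real.norm_eq_abs _).symm
        _ ≤ Bx := this
    have hney : ∀ m, (A y m).Nonempty := by
      intro m
      refine A_nonempty_of_bound (B := By) (fun i => ?_) m
      have := hBy ⟨i, rfl⟩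
      calc y i ≤ |y i| := le_abs_self _
        _ = ‖y i‖ := (Real.norm_eq_abs _).symm
        _ ≤ By := this
    have h1 : ∀ n, decRearrange x n ≤ decRearrange y n + c :=
      d_le_d_add hc0 (fun i => by have := hbound i; rw [abs_sub_le_iff] at this; linarith) hney
    have h2 : ∀ n, decRearrange y n ≤ decRearrange x n + c :=
      d_le_d_add hc0 (fun i => by have := hbound i; rw [abs_sub_le_iff] at this; linarith) hnex
    refine essSup_le_of_ae_le M (Filter.Eventually.of_forall (fun n => ?_))
    show (‖decRearrange x n - decRearrange y n‖₊ : ℝ≥0∞) ≤ M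
    rw [← enorm_eq_nnnorm, Real.enorm_eq_ofReal_abs]
    have : |decRearrange x n - decRearrange y n| ≤ c := by
      rw [abs_sub_le_iff]
      constructor <;> [linarith [h1 n]; linarith [h2 n]]
    calc ENNReal.ofReal |decRearrange x n - decRearrange y n| ≤ ENNReal.ofReal c :=
          ENNReal.ofReal_le_ofReal this
      _ = M := ENNReal.ofReal_toReal hMtop
  · -- the case p < ∞
    have hp0 : p ≠ 0 := by
      intro h; rw [h] at hp; exact absurd hp (by simp)
    set q := p.toReal with hqdef
    have hq : 1 ≤ q := by
      rw [hqdef, ← ENNReal.toReal_one]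
      exact ENNReal.toReal_mono hptop hp
    have hq0 : 0 < q := by linarith
    have hsx : Summable fun i => x i ^ q := by
      have := hx.summable (by rw [← hqdef]; linarith : 0 < p.toReal)
      refine this.congr (fun i => ?_)
      rw [Real.norm_eq_abs, abs_of_nonneg (hx0 i), hqdef]
    have hsy : Summable fun i => y i ^ q := by
      have := hy.summable (by rw [← hqdef]; linarith : 0 < p.toReal)
      refine this.congr (fun i => ?_)
      rw [Real.norm_eq_abs, abs_of_nonneg (hy0 i), hqdef]
    have hsd : Summable fun i => |x i - y i| ^ q := by
      have hxy := hx.sub hy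
      have := hxy.summable (by rw [← hqdef]; linarith : 0 < p.toReal)
      refine this.congr (fun i => ?_)
      simp only [Pi.sub_apply, Real.norm_eq_abs, hqdef]
    rw [eLpNorm_eq_lintegral_rpow_enorm_toReal hp0 hptop, eLpNorm_eq_lintegral_rpow_enorm_toReal hp0 hptop,
      MeasureTheory.lintegral_count, MeasureTheory.lintegral_count]
    refine ENNReal.rpow_le_rpow ?_ (by positivity)
    -- reduce to comparing the ENNReal tsums
    have hconv : ∀ r : ℝ, ‖r‖ₑ ^ q = ENNReal.ofReal (|r| ^ q) := by
      intro r
      rw [Real.enorm_eq_ofReal_abs, ← ENNReal.ofReal_rpow_of_nonneg (abs_nonneg r) hq0.le]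
    simp only [← hqdef, hconv]
    rw [← ENNReal.ofReal_tsum_of_nonneg (fun i => Real.rpow_nonneg (abs_nonneg _) q) hsd]
    rw [ENNReal.tsum_eq_iSup_sum]
    refine iSup_le (fun s => ?_)
    set N := (s.sup id) + 1 with hN
    have hsub : s ⊆ Finset.range N := by
      intro i hi
      rw [Finset.mem_range, hN]
      exact Nat.lt_succ_of_le (Finset.le_sup (f := id) hi)
    calc ∑ n ∈ s, ENNReal.ofReal (|decRearrange x n - decRearrange y n| ^ q)
        ≤ ∑ n ∈ Finset.range N, ENNReal.ofReal (|decRearrange x n - decRearrange y n| ^ q) :=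
          Finset.sum_le_sum_of_subset hsub
      _ = ENNReal.ofReal (∑ n ∈ Finset.range N, |decRearrange x n - decRearrange y n| ^ q) :=
          (ENNReal.ofReal_sum_of_nonneg (fun i _ => Real.rpow_nonneg (abs_nonneg _) q)).symm
      _ ≤ ENNReal.ofReal (∑' i, |x i - y i| ^ q) :=
          ENNReal.ofReal_le_ofReal (main_finsum hq hx0 hy0 hsx hsy N)
end
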